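/- arXiv:1405.5240 — 4 statements merged into one kernel-verified Lean document; each statement's English description precedes it below -/
import Mathlib

section
/- For every real x ≠ 0, ∫_{−∞}^{∞} sinc(u) sinc(u + x) du = π sinc(x); consequently, for every nonzero integer s, ∫_{−∞}^{∞} sinc(u) sinc(u + sπ) du = 0. -/
open MeasureTheory Real

noncomputable section

/-- The (unnormalized) sinc function: `sin u / u`, extended by `1` at `0`. -/
def sinc (u : ℝ) : ℝ := if u = 0 then 1 else Real.sin u / u

open Filter Topology FourierTransform


lemma sinc_zero : _root_.sinc 0 = 1 := if_pos rfl

lemma sinc_of_ne (u : ℝ) (hu : u ≠ 0) : _root_.sinc u = Real.sin u / u := if_neg hu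

lemma sinc_neg (u : ℝ) : _root_.sinc (-u) = _root_.sinc u := by
  rcases eq_or_ne u 0 with h | h
  · simp [h]
  · rw [sinc_of_ne _ h, sinc_of_ne _ (neg_ne_zero.2 h), Real.sin_neg, neg_div_neg_eq]

lemma abs_sinc_le_one (u : ℝ) : |_root_.sinc u| ≤ 1 := by
  rcases eq_or_ne u 0 with h | h
  · simp [h, _root_.sinc_zero]
  · rw [sinc_of_ne _ h, abs_div]
    rw [div_le_one (abs_pos.2 h)]
    exact Real.abs_sin_le_abs
    
lemma abs_sinc_le_inv (u : ℝ) (hu : u ≠ 0) : |_root_.sinc u| ≤ 1 / |u| := by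
  rw [sinc_of_ne _ hu, abs_div]
  gcongr
  exact Real.abs_sin_le_one _

lemma continuous_sinc : Continuous _root_.sinc := by
  rw [continuous_iff_continuousAt]
  intro a
  rcases eq_or_ne a 0 with rfl | ha
  · have h := hasDerivAt_iff_tendsto_slope.1 (Real.hasDerivAt_sin 0)
    rw [Real.cos_zero] at h
    have : ∀ t : ℝ, t ≠ 0 → slope Real.sin 0 t = _root_.sinc t := by
      intro t ht
      simp [slope_def_field, sinc_of_ne _ ht, div_eq_div_iff]
    unfold ContinuousAt
    rw [_root_.sinc_zero]
    rw [← nhdsNE_sup_pure (0:ℝ)]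
    rw [Filter.tendsto_sup]
    constructor
    · exact Filter.Tendsto.congr' (by filter_upwards [self_mem_nhdsWithin] using fun t ht => this t ht) h
    · simpa [_root_.sinc_zero] using tendsto_pure_nhds _root_.sinc 0
  · have : ContinuousAt (fun u => Real.sin u / u) a :=
      (Real.continuous_sin.continuousAt).div continuousAt_id ha
    apply this.congr
    filter_upwards [isOpen_ne.mem_nhds ha] with t ht
    exact (sinc_of_ne _ ht).symm

lemma sinc_mul_cos (u : ℝ) : _root_.sinc u * Real.cos u = _root_.sinc (2*u) := by
  rcases eq_or_ne u 0 with rfl | h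
  · simp [_root_.sinc_zero]
  · rw [sinc_of_ne _ h, sinc_of_ne _ (by simpa using h), Real.sin_two_mul]
    field_simp

lemma sin_dirichlet (n : ℕ) (t : ℝ) :
    Real.sin ((2*n+1)*t) =
      Real.sin t * (1 + 2 * ∑ k ∈ Finset.range n, Real.cos (2*(k+1)*t)) := by
  induction n with
  | zero => simp
  | succ n ih =>
    have key : Real.sin ((2*(n+1)+1)*t) - Real.sin ((2*n+1)*t)
        = 2 * Real.sin t * Real.cos ((2*(n+1))*t) := by
      rw [Real.sin_sub_sin]
      ring_nf
    have : Real.sin ((2*(n+1)+1)*t)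
        = Real.sin ((2*n+1)*t) + 2 * Real.sin t * Real.cos (2*(n+1)*t) := by
      push_cast at key ⊢; linarith [key]
    push_cast
    rw [this, ih, Finset.sum_range_succ]
    ring

lemma integral_dirichlet (n : ℕ) :
    ∫ t in (0:ℝ)..(π/2), (1 + 2 * ∑ k ∈ Finset.range n, Real.cos (2*(k+1)*t)) = π/2 := by
  have h1 : ∀ k : ℕ, ∫ t in (0:ℝ)..(π/2), Real.cos (2*(k+1)*t) = 0 := by
    intro k
    have hc : (2*(k+1):ℝ) ≠ 0 := by positivity
    rw [intervalIntegral.integral_comp_mul_left _ hc, integral_cos]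
    have : (2*((k:ℝ)+1)*(π/2)) = ((k+1):ℕ) * π := by push_cast; ring
    rw [this]
    simp only [smul_eq_mul, mul_eq_zero]
    right
    have h2 := Real.sin_nat_mul_pi (k+1)
    push_cast at h2
    simp [h2]
  have hint : ∀ k ∈ Finset.range n, IntervalIntegrable
      (fun t => Real.cos (2*(k+1)*t)) volume 0 (π/2) :=
    fun k _ => (Real.continuous_cos.comp (continuous_const.mul continuous_id)).intervalIntegrable _ _
  rw [intervalIntegral.integral_add (intervalIntegrable_const)
      (((by continuity : Continuous fun t : ℝ => 2 * ∑ k ∈ Finset.range n, Real.cos (2*(k+1)*t))).intervalIntegrable _ _)]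
  rw [intervalIntegral.integral_const_mul, intervalIntegral.integral_finset_sum hint]
  simp [h1, Finset.sum_const_zero]

def gD (t : ℝ) : ℝ := if t = 0 then 0 else 1/Real.sin t - 1/t

lemma measurable_gD : Measurable gD := by
  unfold gD
  simp only [one_div]
  exact Measurable.ite measurableSet_eq measurable_const
    (Real.continuous_sin.measurable.inv.sub measurable_inv)

lemma gD_nonneg {t : ℝ} (ht : t ∈ Set.Ioc (0:ℝ) (π/2)) : 0 ≤ gD t := by
  obtain ⟨ht0, ht2⟩ := ht
  have hsinpos : 0 < Real.sin t := Real.sin_pos_of_pos_of_lt_pi ht0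
    (lt_of_le_of_lt ht2 (by linarith [Real.pi_pos]))
  have hsin_le : Real.sin t ≤ t := Real.sin_le ht0.le
  rw [gD, if_neg ht0.ne', sub_nonneg]
  exact one_div_le_one_div_of_le hsinpos hsin_le

lemma gD_bound {t : ℝ} (ht : t ∈ Set.Ioc (0:ℝ) (π/2)) : |gD t| ≤ 2 := by
  have hnonneg := gD_nonneg ht
  obtain ⟨ht0, ht2⟩ := ht
  have hpi : (0:ℝ) < π := Real.pi_pos
  have hpi4 : π ≤ 4 := Real.pi_le_four
  have hsinpos : 0 < Real.sin t := Real.sin_pos_of_pos_of_lt_pi ht0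
    (lt_of_le_of_lt ht2 (by linarith))
  have hsin_le : Real.sin t ≤ t := Real.sin_le ht0.le
  have hjordan : 2/π * t ≤ Real.sin t := Real.mul_le_sin ht0.le ht2
  have hg : gD t = 1/Real.sin t - 1/t := if_neg ht0.ne'
  rw [abs_of_nonneg hnonneg, hg]
  have htpos : 0 < 1/t := by positivity
  rcases le_or_gt t 1 with h1 | h1
  · have hcube : t - t^3/4 < Real.sin t := by
      linarith [Real.sin_gt_sub_cube ht0, pow_pos ht0 3]
    have key : 1/Real.sin t - 1/t = (t - Real.sin t)/(Real.sin t * t) := by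
      rw [div_sub_div _ _ hsinpos.ne' ht0.ne']; ring_nf
    rw [key, div_le_iff₀ (by positivity)]
    have h2 : 2/π * t * t ≤ Real.sin t * t := by nlinarith
    nlinarith [pow_le_pow_of_le_one ht0.le h1 (show 2 ≤ 3 by norm_num),
      mul_pos ht0 hsinpos]
  · have hs2 : (1:ℝ)/2 ≤ Real.sin t := by
      have : 2/π * 1 ≤ 2/π * t := by
        apply mul_le_mul_of_nonneg_left h1.le (by positivity)
      have h4 : (1:ℝ)/2 ≤ 2/π := by
        rw [div_le_div_iff₀ (by norm_num) hpi]; linarith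
      linarith
    have : 1/Real.sin t ≤ 2 := by
      rw [div_le_iff₀ hsinpos]; linarith
    linarith

lemma integrableOn_gD : IntegrableOn gD (Set.Ioc 0 (π/2)) := by
  apply Measure.integrableOn_of_bounded (M := 2) (measure_Ioc_lt_top).ne
    measurable_gD.aestronglyMeasurable
  rw [ae_restrict_iff' measurableSet_Ioc]
  exact Filter.Eventually.of_forall fun t ht => by
    simpa [Real.norm_eq_abs] using gD_bound ht

lemma tendsto_RL :
    Tendsto (fun n : ℕ => ∫ t in (0:ℝ)..(π/2), Real.sin ((2*n+1)*t) * gD t)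
      atTop (𝓝 0) := by
  set s : Set ℝ := Set.Ioc 0 (π/2) with hs
  set F : ℝ → ℂ := Set.indicator s (fun t => ((gD t : ℝ) : ℂ)) with hF
  have hFint : Integrable F := by
    rw [hF, integrable_indicator_iff measurableSet_Ioc]
    exact integrableOn_gD.ofReal
  have h0 : Tendsto (𝓕 F) (cocompact ℝ) (𝓝 0) := Real.zero_at_infty_fourier F
  set w : ℕ → ℝ := fun n => -((2*n+1)/(2*π)) with hw
  have hwt : Tendsto w atTop (cocompact ℝ) := by
    rw [cocompact_eq_atBot_atTop]
    refine Tendsto.mono_right ?_ le_sup_left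
    apply Filter.tendsto_neg_atBot_iff.mpr
    apply Filter.Tendsto.atTop_div_const (by positivity)
    apply Filter.tendsto_atTop_add_const_right
    exact (tendsto_natCast_atTop_atTop).const_mul_atTop (by norm_num)
  have h1 : Tendsto (fun n => (𝓕 F (w n)).im) atTop (𝓝 0) := by
    have := (Complex.continuous_im.tendsto 0).comp (h0.comp hwt)
    simpa [Function.comp_def] using this
  have claim : ∀ n : ℕ, (𝓕 F (w n)).im
      = ∫ t in (0:ℝ)..(π/2), Real.sin ((2*n+1)*t) * gD t := by
    intro n
    rw [Real.fourier_real_eq_integral_exp_smul]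
    have harg : ∀ v : ℝ, -2 * π * v * w n = (2*n+1)*v := by
      intro v
      rw [hw]
      field_simp
    have hIm : ∀ v : ℝ, (Complex.exp (↑(-2 * π * v * w n) * Complex.I) • F v).im
        = Real.sin ((2*n+1)*v) * Set.indicator s gD v := by
      intro v
      rw [harg v, hF]
      by_cases hv : v ∈ s
      · rw [Set.indicator_of_mem hv, Set.indicator_of_mem hv]
        simp only [smul_eq_mul, Complex.mul_im, Complex.exp_ofReal_mul_I_im,
          Complex.exp_ofReal_mul_I_re, Complex.ofReal_im, Complex.ofReal_re,
          mul_zero, zero_add]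
      · rw [Set.indicator_of_notMem hv, Set.indicator_of_notMem hv]
        simp
    have hint2 : Integrable fun v => Complex.exp (↑(-2 * π * v * w n) * Complex.I) • F v := by
      apply Integrable.mono' hFint.norm
      · apply AEStronglyMeasurable.smul (f := fun v => Complex.exp (↑(-2 * π * v * w n) * Complex.I)) ?_ hFint.aestronglyMeasurable
        apply Continuous.aestronglyMeasurable
        exact Complex.continuous_exp.comp ((Complex.continuous_ofReal.comp (by continuity)).mul continuous_const)
      · refine Filter.Eventually.of_forall fun v => ?_
        rw [norm_smul, Complex.norm_exp_ofReal_mul_I, one_mul]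
    rw [show (∫ v : ℝ, Complex.exp (↑(-2 * π * v * w n) * Complex.I) • F v).im
        = ∫ v : ℝ, (Complex.exp (↑(-2 * π * v * w n) * Complex.I) • F v).im by
      rw [← RCLike.im_eq_complex_im]
      exact (integral_im hint2).symm]
    simp_rw [hIm]
    have : ∀ v : ℝ, Real.sin ((2*n+1)*v) * Set.indicator s gD v
        = Set.indicator s (fun v => Real.sin ((2*n+1)*v) * gD v) v := by
      intro v
      by_cases hv : v ∈ s
      · rw [Set.indicator_of_mem hv, Set.indicator_of_mem hv]
      · rw [Set.indicator_of_notMem hv, Set.indicator_of_notMem hv, mul_zero]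
    simp_rw [this]
    rw [integral_indicator measurableSet_Ioc,
      intervalIntegral.integral_of_le (by positivity : (0:ℝ) ≤ π/2)]
  exact h1.congr claim

lemma intervalIntegrable_sin_gD (c : ℝ) :
    IntervalIntegrable (fun t => Real.sin (c*t) * gD t) volume 0 (π/2) := by
  rw [intervalIntegrable_iff_integrableOn_Ioc_of_le (by positivity)]
  apply Integrable.bdd_mul (c := 1) integrableOn_gD
  · exact (Real.continuous_sin.comp (continuous_const.mul continuous_id)).aestronglyMeasurable
  · exact Filter.Eventually.of_forall fun t => by simpa [Real.norm_eq_abs] using Real.abs_sin_le_one (c*t)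

lemma integral_sinc_seq (n : ℕ) :
    ∫ t in (0:ℝ)..((2*(n:ℝ)+1)*(π/2)), _root_.sinc t
      = π/2 - ∫ t in (0:ℝ)..(π/2), Real.sin ((2*n+1)*t) * gD t := by
  have hc : ((2*(n:ℝ)+1)) ≠ 0 := by positivity
  have hscale : ∫ t in (0:ℝ)..((2*(n:ℝ)+1)*(π/2)), _root_.sinc t
      = ∫ t in (0:ℝ)..(π/2), (2*(n:ℝ)+1) * _root_.sinc ((2*(n:ℝ)+1)*t) := by
    rw [intervalIntegral.integral_const_mul, intervalIntegral.integral_comp_mul_left _ hc]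
    rw [mul_zero, smul_eq_mul]
    field_simp
  rw [hscale]
  have hpt : ∀ t ∈ Set.uIcc (0:ℝ) (π/2),
      (2*(n:ℝ)+1) * _root_.sinc ((2*(n:ℝ)+1)*t)
        = (1 + 2 * ∑ k ∈ Finset.range n, Real.cos (2*(k+1)*t))
          - Real.sin ((2*n+1)*t) * gD t := by
    intro t ht
    rw [Set.uIcc_of_le (by positivity)] at ht
    obtain ⟨ht0, ht2⟩ := ht
    rcases eq_or_ne t 0 with rfl | htne
    · simp only [mul_zero, _root_.sinc_zero, gD, if_pos rfl, Real.cos_zero, Real.sin_zero,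
        mul_one, Finset.sum_const, Finset.card_range, nsmul_eq_mul, zero_mul, sub_zero]
      ring
    · have ht0' : 0 < t := lt_of_le_of_ne ht0 (Ne.symm htne)
      have hsinpos : 0 < Real.sin t := Real.sin_pos_of_pos_of_lt_pi ht0'
        (lt_of_le_of_lt ht2 (by linarith [Real.pi_pos]))
      have hD := sin_dirichlet n t
      have hDdiv : (1 + 2 * ∑ k ∈ Finset.range n, Real.cos (2*(k+1)*t))
          = Real.sin ((2*n+1)*t) / Real.sin t := by
        rw [hD, mul_div_cancel_left₀ _ hsinpos.ne']
      rw [hDdiv, sinc_of_ne _ (mul_ne_zero hc htne), gD, if_neg htne]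
      field_simp
      ring
  rw [intervalIntegral.integral_congr hpt]
  rw [intervalIntegral.integral_sub ?_ (intervalIntegrable_sin_gD _)]
  · rw [integral_dirichlet n]
  · exact ((by continuity : Continuous fun t : ℝ =>
      1 + 2 * ∑ k ∈ Finset.range n, Real.cos (2*(k+1)*t))).intervalIntegrable _ _

lemma tendsto_sinc_seq :
    Tendsto (fun n : ℕ => ∫ t in (0:ℝ)..((2*(n:ℝ)+1)*(π/2)), _root_.sinc t) atTop (𝓝 (π/2)) := by
  have h := (tendsto_const_nhds (x := π/2)).sub tendsto_RL
  rw [sub_zero] at h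
  exact h.congr fun n => (integral_sinc_seq n).symm

lemma intervalIntegrable_sinc (a b : ℝ) : IntervalIntegrable _root_.sinc volume a b :=
  _root_.continuous_sinc.intervalIntegrable a b

lemma tendsto_integral_sinc :
    Tendsto (fun R : ℝ => ∫ t in (0:ℝ)..R, _root_.sinc t) atTop (𝓝 (π/2)) := by
  have hpi : (0:ℝ) < π := Real.pi_pos
  rw [Metric.tendsto_atTop]
  intro ε hε
  obtain ⟨N₁, hN₁⟩ := Metric.tendsto_atTop.1 tendsto_sinc_seq (ε/2) (by positivity)
  set N₂ : ℕ := ⌈4/ε⌉₊ + 1 with hN₂def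
  set N : ℕ := max N₁ N₂ with hNdef
  refine ⟨(2*(N:ℝ)+1)*(π/2), fun R hR => ?_⟩
  set n : ℕ := ⌊R/π - 1/2⌋₊ with hndef
  have hRN : ((N:ℝ)) ≤ R/π - 1/2 := by
    rw [le_sub_iff_add_le, le_div_iff₀ hpi]
    nlinarith [hR]
  have hnN : N ≤ n := Nat.le_floor hRN
  have hfl : (n:ℝ) ≤ R/π - 1/2 := Nat.floor_le (le_trans (Nat.cast_nonneg N) hRN)
  have hfl2 : R/π - 1/2 < (n:ℝ) + 1 := Nat.lt_floor_add_one _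
  set Rn : ℝ := (2*(n:ℝ)+1)*(π/2) with hRndef
  have hRnpos : 0 < Rn := by positivity
  have hRnR : Rn ≤ R := by
    have h := hfl
    rw [le_sub_iff_add_le, le_div_iff₀ hpi] at h
    rw [hRndef]
    nlinarith
  have hRRn : R - Rn ≤ π := by
    rw [hRndef]
    have h2 : R < ((n:ℝ) + 3/2) * π := by
      rw [← div_lt_iff₀ hpi]
      linarith
    nlinarith
  have hsplit : (∫ t in (0:ℝ)..R, _root_.sinc t) - (∫ t in (0:ℝ)..Rn, _root_.sinc t)
      = ∫ t in Rn..R, _root_.sinc t := by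
    rw [← intervalIntegral.integral_add_adjacent_intervals
      (intervalIntegrable_sinc 0 Rn) (intervalIntegrable_sinc Rn R)]
    ring
  have htail : |∫ t in Rn..R, _root_.sinc t| ≤ (1/Rn) * |R - Rn| := by
    have := intervalIntegral.norm_integral_le_of_norm_le_const
      (C := 1/Rn) (f := _root_.sinc) (a := Rn) (b := R) ?_
    · simpa [Real.norm_eq_abs] using this
    · intro t ht
      rw [Set.uIoc_of_le hRnR] at ht
      have htpos : 0 < t := lt_trans hRnpos ht.1
      refine le_trans (abs_sinc_le_inv t htpos.ne') ?_
      rw [abs_of_pos htpos]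
      gcongr
      exact ht.1.le
  have hn1 : (1:ℝ) ≤ (N₂:ℝ) := by
    exact_mod_cast Nat.le_add_left 1 ⌈4/ε⌉₊
  have htail2 : (1/Rn) * |R - Rn| ≤ ε/2 := by
    have h1 : |R - Rn| ≤ π := abs_le.2 ⟨by linarith, hRRn⟩
    have h2 : (1/Rn) * |R - Rn| ≤ (1/Rn) * π := by gcongr
    refine h2.trans ?_
    have hNn : (N₂:ℝ) ≤ (n:ℝ) := by exact_mod_cast le_trans (le_max_right _ _) hnN
    have hceil : 4/ε ≤ (N₂:ℝ) := by
      rw [hN₂def]; push_cast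
      linarith [Nat.le_ceil (4/ε)]
    have hRn4 : 4/ε * π ≤ Rn * 2 := by
      rw [hRndef]; nlinarith
    rw [div_mul_eq_mul_div, one_mul, div_le_iff₀ hRnpos]
    rw [div_mul_eq_mul_div, div_le_iff₀ hε] at hRn4
    nlinarith
  have hseq := hN₁ n (le_trans (le_max_left _ _) hnN)
  rw [Real.dist_eq] at hseq ⊢
  have : (∫ t in (0:ℝ)..R, _root_.sinc t) - π/2
      = (∫ t in Rn..R, _root_.sinc t) + ((∫ t in (0:ℝ)..Rn, _root_.sinc t) - π/2) := by
    rw [← hsplit]; ring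
  rw [this]
  calc |(∫ t in Rn..R, _root_.sinc t) + ((∫ t in (0:ℝ)..Rn, _root_.sinc t) - π/2)|
      ≤ |∫ t in Rn..R, _root_.sinc t| + |(∫ t in (0:ℝ)..Rn, _root_.sinc t) - π/2| := abs_add_le _ _
    _ < ε/2 + ε/2 := by
        apply add_lt_add_of_le_of_lt (le_trans htail htail2)
        exact hseq
    _ = ε := by ring

lemma sinc_symm_integral (c : ℝ) : ∫ t in (0:ℝ)..(-c), _root_.sinc t = - ∫ t in (0:ℝ)..c, _root_.sinc t := by
  have h := intervalIntegral.integral_comp_neg (a := (0:ℝ)) (b := c) (f := _root_.sinc)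
  simp_rw [_root_.sinc_neg] at h
  simp only [neg_zero] at h
  rw [intervalIntegral.integral_symm, h]

lemma tendsto_integral_sinc_general {a b : ℝ → ℝ}
    (ha : Tendsto a atTop atBot) (hb : Tendsto b atTop atTop) :
    Tendsto (fun R => ∫ t in (a R)..(b R), _root_.sinc t) atTop (𝓝 π) := by
  have h1 : Tendsto (fun R => ∫ t in (0:ℝ)..(b R), _root_.sinc t) atTop (𝓝 (π/2)) :=
    tendsto_integral_sinc.comp hb
  have h2 : Tendsto (fun R => ∫ t in (0:ℝ)..(a R), _root_.sinc t) atTop (𝓝 (-(π/2))) := by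
    have hneg : Tendsto (fun R => -(a R)) atTop atTop := tendsto_neg_atBot_iff.mp (by simpa using ha)
    have := (tendsto_integral_sinc.comp hneg).neg
    refine Tendsto.congr (fun R => ?_) this
    simp only [Function.comp_apply]
    rw [← sinc_symm_integral, neg_neg]
  have h := h1.sub h2
  rw [show π/2 - -(π/2) = π by ring] at h
  refine h.congr fun R => ?_
  rw [← intervalIntegral.integral_add_adjacent_intervals
    (intervalIntegrable_sinc 0 (a R)) (intervalIntegrable_sinc (a R) (b R))]
  ring

lemma integral_odd_symm {f : ℝ → ℝ} (hf : ∀ t, f (-t) = - f t) (R : ℝ) :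
    ∫ t in (-R)..R, f t = 0 := by
  have h := intervalIntegral.integral_comp_neg (a := (-R)) (b := R) (f := f)
  simp_rw [hf] at h
  rw [neg_neg, intervalIntegral.integral_neg] at h
  linarith [h]

lemma continuous_shift (x : ℝ) : Continuous fun u : ℝ => _root_.sinc (u + x) :=
  _root_.continuous_sinc.comp (continuous_id.add continuous_const)

lemma integrable_sinc_mul (x : ℝ) : Integrable (fun u : ℝ => _root_.sinc u * _root_.sinc (u+x)) := by
  set M : ℝ := 2*|x|+1 with hM
  set C : ℝ := 4*(1+M^2) with hC
  have hM1 : 1 ≤ M := by rw [hM]; linarith [abs_nonneg x]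
  have hC4 : 4 ≤ C := by rw [hC]; nlinarith
  apply Integrable.mono' ((integrable_inv_one_add_sq).const_mul C)
  · exact (_root_.continuous_sinc.mul (continuous_shift x)).aestronglyMeasurable
  · refine Filter.Eventually.of_forall fun u => ?_
    rw [Real.norm_eq_abs, abs_mul, ← div_eq_mul_inv]
    rcases le_or_gt |u| M with h | h
    · have h1 : |_root_.sinc u| * |_root_.sinc (u+x)| ≤ 1 :=
        mul_le_one₀ (_root_.abs_sinc_le_one u) (abs_nonneg _) (_root_.abs_sinc_le_one _)
      refine h1.trans ?_
      rw [le_div_iff₀ (by positivity)]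
      nlinarith [sq_abs u, mul_self_le_mul_self (abs_nonneg u) h, sq_nonneg M]
    · have hu1 : 1 ≤ |u| := le_trans hM1 h.le
      have hu0 : u ≠ 0 := by
        intro h0; rw [h0] at hu1; simp at hu1; linarith
      have hxM : |x| = (M-1)/2 := by rw [hM]; ring
      have h3 : |u| ≤ |u+x| + |x| := by
        calc |u| = |(u+x) + (-x)| := by ring_nf
        _ ≤ |u+x| + |(-x)| := abs_add_le _ _
        _ = |u+x| + |x| := by rw [abs_neg]
      have hux : |u|/2 ≤ |u+x| := by
        rw [hxM] at h3
        linarith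
      have huxpos : 0 < |u+x| := by linarith
      have huxne : u + x ≠ 0 := by
        intro h0; rw [h0] at huxpos; simp at huxpos
      have hb1 : |_root_.sinc u| * |_root_.sinc (u+x)| ≤ (1/|u|) * (1/|u+x|) :=
        mul_le_mul (abs_sinc_le_inv u hu0) (abs_sinc_le_inv _ huxne) (abs_nonneg _)
          (by positivity)
      refine hb1.trans ?_
      rw [div_mul_div_comm, one_mul, div_le_div_iff₀ (by positivity) (by positivity)]
      nlinarith [mul_le_mul_of_nonneg_left hux (abs_nonneg u), abs_mul_abs_self u,
        sq_nonneg u]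

lemma xf_eq (x u : ℝ) : x * (_root_.sinc u * _root_.sinc (u+x))
    = _root_.sinc u * Real.sin (u+x) - Real.sin u * _root_.sinc (u+x) := by
  rcases eq_or_ne u 0 with rfl | hu
  · rcases eq_or_ne x 0 with rfl | hx
    · simp
    · rw [zero_add, _root_.sinc_zero, sinc_of_ne _ hx, Real.sin_zero]
      field_simp; ring
  · rcases eq_or_ne (u+x) 0 with h0 | h0
    · rw [h0, _root_.sinc_zero, Real.sin_zero]
      have hxu : x = -u := by linarith
      rw [hxu, sinc_of_ne _ hu]
      field_simp
      ring
    · rw [sinc_of_ne _ hu, sinc_of_ne _ h0]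
      field_simp
      ring

lemma sinc_orth_main (x : ℝ) (hx : x ≠ 0) :
    ∫ u : ℝ, _root_.sinc u * _root_.sinc (u + x) = π * _root_.sinc x := by
  have hInt := integrable_sinc_mul x
  have hT0 : Tendsto (fun R : ℝ => ∫ u in (-R)..R, _root_.sinc u * _root_.sinc (u+x)) atTop
      (𝓝 (∫ u : ℝ, _root_.sinc u * _root_.sinc (u+x))) :=
    intervalIntegral_tendsto_integral hInt tendsto_neg_atTop_atBot tendsto_id
  have hT1 := hT0.const_mul x
  have hcont1 : Continuous fun u : ℝ => _root_.sinc u * Real.sin (u+x) :=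
    _root_.continuous_sinc.mul (Real.continuous_sin.comp (continuous_id.add continuous_const))
  have hcont2 : Continuous fun u : ℝ => Real.sin u * _root_.sinc (u+x) :=
    Real.continuous_sin.mul (continuous_shift x)
  have hcont3 : Continuous fun u : ℝ => _root_.sinc u * Real.sin u := _root_.continuous_sinc.mul Real.continuous_sin
  have hcont4 : Continuous fun u : ℝ => _root_.sinc (2*u) :=
    _root_.continuous_sinc.comp (continuous_const.mul continuous_id)
  have hcont5 : Continuous fun u : ℝ => Real.sin u * _root_.sinc u := Real.continuous_sin.mul _root_.continuous_sinc
  have hdecomp : ∀ R : ℝ, x * ∫ u in (-R)..R, _root_.sinc u * _root_.sinc (u+x)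
      = Real.sin x * (∫ u in (-R)..R, _root_.sinc (2*u))
        - (Real.cos x * (∫ v in (-R+x)..(R+x), Real.sin v * _root_.sinc v)
           - Real.sin x * (∫ v in (-R+x)..(R+x), _root_.sinc (2*v))) := by
    intro R
    rw [← intervalIntegral.integral_const_mul]
    simp_rw [xf_eq x]
    rw [intervalIntegral.integral_sub (hcont1.intervalIntegrable _ _)
      (hcont2.intervalIntegrable _ _)]
    have hAeq : ∫ u in (-R)..R, _root_.sinc u * Real.sin (u+x)
        = Real.cos x * (∫ u in (-R)..R, _root_.sinc u * Real.sin u)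
          + Real.sin x * ∫ u in (-R)..R, _root_.sinc (2*u) := by
      have hpt : ∀ u : ℝ, _root_.sinc u * Real.sin (u+x)
          = Real.cos x * (_root_.sinc u * Real.sin u) + Real.sin x * _root_.sinc (2*u) := by
        intro u; rw [Real.sin_add, ← sinc_mul_cos]; ring
      simp_rw [hpt]
      rw [intervalIntegral.integral_add ((show Continuous fun u => Real.cos x * (_root_.sinc u * Real.sin u) from continuous_const.mul hcont3).intervalIntegrable _ _)
        ((show Continuous fun u => Real.sin x * _root_.sinc (2*u) from continuous_const.mul hcont4).intervalIntegrable _ _),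
        intervalIntegral.integral_const_mul, intervalIntegral.integral_const_mul]
    have hodd : ∫ u in (-R)..R, _root_.sinc u * Real.sin u = 0 :=
      integral_odd_symm (fun t => by rw [_root_.sinc_neg, Real.sin_neg]; ring) R
    have hBeq : ∫ u in (-R)..R, Real.sin u * _root_.sinc (u+x)
        = ∫ v in (-R+x)..(R+x), Real.sin (v - x) * _root_.sinc v := by
      rw [← intervalIntegral.integral_comp_add_right (fun v => Real.sin (v-x) * _root_.sinc v) x]
      simp
    have hBexp : ∫ v in (-R+x)..(R+x), Real.sin (v - x) * _root_.sinc v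
        = Real.cos x * (∫ v in (-R+x)..(R+x), Real.sin v * _root_.sinc v)
          - Real.sin x * (∫ v in (-R+x)..(R+x), _root_.sinc (2*v)) := by
      have hpt : ∀ v : ℝ, Real.sin (v - x) * _root_.sinc v
          = Real.cos x * (Real.sin v * _root_.sinc v) - Real.sin x * _root_.sinc (2*v) := by
        intro v; rw [Real.sin_sub, ← sinc_mul_cos]; ring
      simp_rw [hpt]
      rw [intervalIntegral.integral_sub ((show Continuous fun v => Real.cos x * (Real.sin v * _root_.sinc v) from continuous_const.mul hcont5).intervalIntegrable _ _)
        ((show Continuous fun v => Real.sin x * _root_.sinc (2*v) from continuous_const.mul hcont4).intervalIntegrable _ _),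
        intervalIntegral.integral_const_mul, intervalIntegral.integral_const_mul]
    rw [hAeq, hodd, hBeq, hBexp]
    ring
  have hL1 : Tendsto (fun R : ℝ => ∫ u in (-R)..R, _root_.sinc (2*u)) atTop (𝓝 (π/2)) := by
    have ha : Tendsto (fun R : ℝ => 2*(-R)) atTop atBot := by
      apply Filter.Tendsto.const_mul_atBot (by norm_num : (0:ℝ) < 2) tendsto_neg_atTop_atBot
    have hb : Tendsto (fun R : ℝ => 2*R) atTop atTop := by
      apply Filter.Tendsto.const_mul_atTop (by norm_num : (0:ℝ) < 2) tendsto_id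
    have h := (tendsto_integral_sinc_general ha hb).const_mul (2⁻¹ : ℝ)
    rw [show (2⁻¹ : ℝ) * π = π/2 by ring] at h
    refine h.congr fun R => ?_
    rw [intervalIntegral.integral_comp_mul_left _root_.sinc (by norm_num : (2:ℝ) ≠ 0), smul_eq_mul]
  have hL2 : Tendsto (fun R : ℝ => ∫ v in (-R+x)..(R+x), _root_.sinc (2*v)) atTop (𝓝 (π/2)) := by
    have ha : Tendsto (fun R : ℝ => 2*(-R+x)) atTop atBot := by
      apply Filter.Tendsto.const_mul_atBot (by norm_num : (0:ℝ) < 2)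
      apply tendsto_atBot_add_const_right
      exact tendsto_neg_atTop_atBot
    have hb : Tendsto (fun R : ℝ => 2*(R+x)) atTop atTop := by
      apply Filter.Tendsto.const_mul_atTop (by norm_num : (0:ℝ) < 2)
      exact tendsto_atTop_add_const_right _ _ tendsto_id
    have h := (tendsto_integral_sinc_general ha hb).const_mul (2⁻¹ : ℝ)
    rw [show (2⁻¹ : ℝ) * π = π/2 by ring] at h
    refine h.congr fun R => ?_
    rw [intervalIntegral.integral_comp_mul_left _root_.sinc (by norm_num : (2:ℝ) ≠ 0), smul_eq_mul]
  have hL3 : Tendsto (fun R : ℝ => ∫ v in (-R+x)..(R+x), Real.sin v * _root_.sinc v) atTop (𝓝 0) := by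
    apply squeeze_zero_norm' (a := fun R => (2*|x|) / (R - |x|))
    · filter_upwards [eventually_gt_atTop (|x| + 1)] with R hR
      have hxR : |x| + 1 < R := hR
      have hpos : 0 < R - |x| := by linarith
      have hsplit : ∫ v in (-R+x)..(R+x), Real.sin v * _root_.sinc v
          = (∫ v in (-R+x)..(R-x), Real.sin v * _root_.sinc v)
            + ∫ v in (R-x)..(R+x), Real.sin v * _root_.sinc v :=
        (intervalIntegral.integral_add_adjacent_intervals
          (hcont5.intervalIntegrable _ _) (hcont5.intervalIntegrable _ _)).symm
      have hzero : ∫ v in (-R+x)..(R-x), Real.sin v * _root_.sinc v = 0 := by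
        rw [show -R+x = -(R-x) by ring]
        exact integral_odd_symm (fun t => by rw [_root_.sinc_neg, Real.sin_neg]; ring) _
      rw [hsplit, hzero, zero_add]
      have hbd := intervalIntegral.norm_integral_le_of_norm_le_const
        (C := 1/(R-|x|)) (f := fun v => Real.sin v * _root_.sinc v) (a := R-x) (b := R+x) ?_
      · refine hbd.trans ?_
        rw [show (R+x) - (R-x) = 2*x by ring]
        rw [div_mul_eq_mul_div, one_mul, abs_mul]
        rw [div_le_div_iff₀ hpos hpos]
        rw [abs_two]
      · intro t ht
        have htlb : R - |x| < t := by
          rcases Set.mem_uIoc.1 ht with h' | h'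
          · have := h'.1; cases abs_cases x with
            | inl hc => linarith [hc.1]
            | inr hc => linarith [hc.1]
          · have := h'.1; cases abs_cases x with
            | inl hc => linarith [hc.1]
            | inr hc => linarith [hc.1]
        have htpos : 0 < t := lt_trans hpos htlb
        rw [Real.norm_eq_abs, abs_mul]
        have h1 : |Real.sin t| ≤ 1 := Real.abs_sin_le_one t
        have h2 : |_root_.sinc t| ≤ 1/t := by
          have := abs_sinc_le_inv t htpos.ne'
          rwa [abs_of_pos htpos] at this
        calc |Real.sin t| * |_root_.sinc t| ≤ 1 * (1/t) :=
              mul_le_mul h1 h2 (abs_nonneg _) (by norm_num)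
          _ = 1/t := one_mul _
          _ ≤ 1/(R-|x|) := by
              rw [div_le_div_iff₀ htpos hpos]; linarith
    · apply Filter.Tendsto.div_atTop tendsto_const_nhds
      exact tendsto_atTop_add_const_right _ _ tendsto_id
  have hT2 : Tendsto (fun R : ℝ => x * ∫ u in (-R)..R, _root_.sinc u * _root_.sinc (u+x)) atTop
      (𝓝 (Real.sin x * (π/2) - (Real.cos x * 0 - Real.sin x * (π/2)))) := by
    have := ((hL1.const_mul (Real.sin x)).sub
      ((hL3.const_mul (Real.cos x)).sub (hL2.const_mul (Real.sin x))))
    exact this.congr fun R => (hdecomp R).symm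
  have hxI := tendsto_nhds_unique hT1 hT2
  rw [sinc_of_ne _ hx]
  field_simp
  nlinarith [hxI]


/-- Orthogonality of the sinc function: for every real `x ≠ 0`,
`∫ sinc(u) sinc(u+x) du = π sinc(x)`, and consequently the integral vanishes
at every nonzero integer shift `x = sπ`. -/
theorem sinc_orthogonality :
    (∀ x : ℝ, x ≠ 0 → ∫ u : ℝ, _root_.sinc u * _root_.sinc (u + x) = π * _root_.sinc x) ∧
    (∀ s : ℤ, s ≠ 0 → ∫ u : ℝ, _root_.sinc u * _root_.sinc (u + s * π) = 0) := by
  constructor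
  · exact sinc_orth_main
  · intro s hs
    have hx : ((s:ℝ)) * π ≠ 0 :=
      mul_ne_zero (Int.cast_ne_zero.2 hs) Real.pi_ne_zero
    rw [sinc_orth_main _ hx, sinc_of_ne _ hx]
    rw [Real.sin_int_mul_pi]
    simp

end
end

section
/- There exists a finite constant C such that for all real y: ∫_{−∞}^{∞} |sin(x) sin(x+y)| / |x(x+y)| dx ≤ C log|y|/|y| whenever |y| ≥ e, and ∫_{−∞}^{∞} |sin(x) sin(x+y)| / |x(x+y)| dx ≤ C whenever |y| < e. -/
open MeasureTheory Real

noncomputable section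

open Set
open scoped ENNReal

/-- majorant -/
def F (u : ℝ) : ℝ := if 1 ≤ |u| then |u|⁻¹ else 1

lemma F_nonneg (u : ℝ) : 0 ≤ F u := by
  unfold F; split <;> positivity

lemma F_le_one (u : ℝ) : F u ≤ 1 := by
  unfold F; split
  · rename_i h
    exact inv_le_one_of_one_le₀ h
  · exact le_rfl

lemma F_eq_inv {u : ℝ} (h : 1 ≤ |u|) : F u = |u|⁻¹ := if_pos h

lemma F_le_inv {u s : ℝ} (hs : 1 ≤ s) (h : s ≤ |u|) : F u ≤ s⁻¹ := by
  rw [F_eq_inv (hs.trans h)]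
  exact inv_anti₀ (lt_of_lt_of_le one_pos hs) h

lemma abs_sinc_le (u : ℝ) : |_root_.sinc u| ≤ F u := by
  unfold _root_.sinc F
  rcases eq_or_ne u 0 with rfl | hu
  · norm_num
  · rw [if_neg hu, abs_div]
    split
    · rename_i h
      have hu0 : (0:ℝ) < |u| := lt_of_lt_of_le one_pos h
      rw [div_le_iff₀ hu0, inv_mul_cancel₀ hu0.ne']
      exact abs_sin_le_one u
    · rename_i h
      rw [div_le_one (abs_pos.mpr hu)]
      exact Real.abs_sin_le_abs

lemma F_measurable : Measurable F := by
  unfold F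
  exact Measurable.ite (measurableSet_le measurable_const measurable_abs)
    measurable_abs.inv measurable_const


lemma F_integrableOn_Icc (a b : ℝ) : IntegrableOn F (Icc a b) := by
  apply Integrable.mono' (integrable_const 1)
    F_measurable.aestronglyMeasurable.restrict
  filter_upwards with x
  rw [Real.norm_eq_abs, abs_of_nonneg (F_nonneg x)]
  exact F_le_one x

lemma F_eq_one {u : ℝ} (h : |u| ≤ 1) : F u = 1 := by
  unfold F
  split
  · rename_i h2
    have : |u| = 1 := le_antisymm h h2
    rw [this]; norm_num
  · rfl

lemma intF (a b : ℝ) : IntervalIntegrable F volume a b :=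
  (F_integrableOn_Icc _ _).intervalIntegrable

lemma integral_F_le {r : ℝ} (hr : 1 ≤ r) :
    ∫ x in Icc (-r) r, F x = 2 + 2 * Real.log r := by
  have h1 : (-r : ℝ) ≤ r := by linarith
  rw [integral_Icc_eq_integral_Ioc, ← intervalIntegral.integral_of_le h1]
  have s1 : ∫ x in (-r)..(-1), F x = Real.log r := by
    have hcong : ∀ x ∈ uIcc (-r) (-1), F x = -x⁻¹ := by
      intro x hx
      rw [uIcc_of_le (by linarith), mem_Icc] at hx
      rw [F_eq_inv (by rw [abs_of_nonpos (by linarith)]; linarith),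
        abs_of_nonpos (by linarith)]
      exact inv_neg
    rw [intervalIntegral.integral_congr hcong, intervalIntegral.integral_neg,
      integral_inv (by rw [uIcc_of_le (by linarith), mem_Icc]; push_neg; intro h; linarith)]
    rw [← Real.log_inv]
    norm_num
  have s2 : ∫ x in (-1:ℝ)..1, F x = 2 := by
    have hcong : ∀ x ∈ uIcc (-1:ℝ) 1, F x = 1 := by
      intro x hx
      rw [uIcc_of_le (by linarith), mem_Icc] at hx
      exact F_eq_one (abs_le.mpr hx)
    rw [intervalIntegral.integral_congr hcong, intervalIntegral.integral_const]
    norm_num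
  have s3 : ∫ x in (1:ℝ)..r, F x = Real.log r := by
    have hcong : ∀ x ∈ uIcc (1:ℝ) r, F x = x⁻¹ := by
      intro x hx
      rw [uIcc_of_le hr, mem_Icc] at hx
      rw [F_eq_inv (by rw [abs_of_nonneg (by linarith)]; linarith),
        abs_of_nonneg (by linarith)]
    rw [intervalIntegral.integral_congr hcong,
      integral_inv (by rw [uIcc_of_le hr, mem_Icc]; push_neg; intro h; linarith)]
    rw [div_one]
  rw [← intervalIntegral.integral_add_adjacent_intervals (intF (-r) 1) (intF 1 r),
    ← intervalIntegral.integral_add_adjacent_intervals (intF (-r) (-1)) (intF (-1) 1),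
    s1, s2, s3]
  ring


lemma lint_F_le {r : ℝ} (hr : 1 ≤ r) :
    ∫⁻ x in Icc (-r) r, ENNReal.ofReal (F x) ≤ ENNReal.ofReal (2 + 2 * Real.log r) := by
  rw [← ofReal_integral_eq_lintegral_ofReal (F_integrableOn_Icc _ _)
    (ae_of_all _ F_nonneg), integral_F_le hr]

lemma inv_sq_integrableOn {s : ℝ} (hs : 0 < s) :
    IntegrableOn (fun u : ℝ => (u ^ 2)⁻¹) (Ioi s) := by
  apply (integrableOn_Ioi_rpow_of_lt (show (-2:ℝ) < -1 by norm_num) hs).congr_fun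
    ?_ measurableSet_Ioi
  intro x hx
  have hx0 : (0:ℝ) < x := hs.trans hx
  show x ^ (-2:ℝ) = (x ^ 2)⁻¹
  rw [show (-2:ℝ) = -(2:ℕ) by norm_num, Real.rpow_neg hx0.le, Real.rpow_natCast]

lemma integral_inv_sq_Ioi {s : ℝ} (hs : 0 < s) :
    ∫ u in Ioi s, (u ^ 2)⁻¹ = s⁻¹ := by
  rw [setIntegral_congr_fun measurableSet_Ioi (g := fun u : ℝ => u ^ (-2:ℝ)) ?_,
    integral_Ioi_rpow_of_lt (by norm_num) hs]
  · rw [show (-2:ℝ) + 1 = -1 by norm_num, Real.rpow_neg_one]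
    field_simp
  · intro x hx
    have hx0 : (0:ℝ) < x := hs.trans hx
    show (x ^ 2)⁻¹ = x ^ (-2:ℝ)
    rw [show (-2:ℝ) = -(2:ℕ) by norm_num, Real.rpow_neg hx0.le, Real.rpow_natCast]

lemma lint_tail_Ioi {s : ℝ} (hs : 0 < s) :
    ∫⁻ u in Ioi s, ENNReal.ofReal ((u ^ 2)⁻¹) ≤ ENNReal.ofReal s⁻¹ := by
  rw [← ofReal_integral_eq_lintegral_ofReal (inv_sq_integrableOn hs)
    (ae_of_all _ (fun x => by positivity)), integral_inv_sq_Ioi hs]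

lemma lint_tail {s : ℝ} (hs : 0 < s) :
    ∫⁻ u in {u : ℝ | s < |u|}, ENNReal.ofReal ((u ^ 2)⁻¹) ≤ ENNReal.ofReal (2 / s) := by
  have hset : {u : ℝ | s < |u|} = Iio (-s) ∪ Ioi s := by
    ext u
    simp [lt_abs, mem_Iio, mem_Ioi, or_comm, lt_neg]
  rw [hset]
  refine (lintegral_union_le _ _ _).trans ?_
  have hneg : ∫⁻ u in Iio (-s), ENNReal.ofReal ((u ^ 2)⁻¹) =
      ∫⁻ u in Ioi s, ENNReal.ofReal ((u ^ 2)⁻¹) := by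
    have h1 : ∀ x : ℝ, (Iio (-s)).indicator (fun u : ℝ => ENNReal.ofReal ((u ^ 2)⁻¹)) x
        = (Ioi s).indicator (fun u : ℝ => ENNReal.ofReal ((u ^ 2)⁻¹)) (-x) := by
      intro x
      rcases lt_or_ge x (-s) with h | h
      · rw [indicator_of_mem (show x ∈ Iio (-s) from h),
          indicator_of_mem (show -x ∈ Ioi s by simp only [mem_Ioi]; linarith)]
        norm_num
      · rw [indicator_of_notMem (show x ∉ Iio (-s) by simpa using h),
          indicator_of_notMem (show -x ∉ Ioi s by simp only [mem_Ioi]; push_neg; linarith)]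
    rw [← lintegral_indicator measurableSet_Iio, ← lintegral_indicator measurableSet_Ioi]
    simp_rw [h1]
    exact (Measure.measurePreserving_neg (volume : Measure ℝ)).lintegral_comp
      (Measurable.indicator (by fun_prop) measurableSet_Ioi)
  rw [hneg, ← two_mul]
  calc 2 * ∫⁻ u in Ioi s, ENNReal.ofReal ((u ^ 2)⁻¹)
      ≤ 2 * ENNReal.ofReal s⁻¹ := by
        exact mul_le_mul_right (lint_tail_Ioi hs) 2
    _ = ENNReal.ofReal (2 / s) := by
        rw [← ENNReal.ofReal_ofNat, ← ENNReal.ofReal_mul (by norm_num)]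
        norm_num [div_eq_mul_inv]


lemma abs_mul_sinc_le (x y : ℝ) : |_root_.sinc x * _root_.sinc (x + y)| ≤ F x * F (x + y) := by
  rw [abs_mul]
  exact mul_le_mul (abs_sinc_le x) (abs_sinc_le (x + y)) (abs_nonneg _) (F_nonneg x)

lemma pointwise_bound {y : ℝ} (hy : 2 ≤ |y|) (x : ℝ) :
    ENNReal.ofReal |_root_.sinc x * _root_.sinc (x + y)| ≤
      (Icc (-(2*|y|)) (2*|y|)).indicator (fun u => ENNReal.ofReal ((2/|y|) * F u)) x
      + (Icc (-(2*|y|)) (2*|y|)).indicator (fun u => ENNReal.ofReal ((2/|y|) * F u)) (x + y)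
      + {u : ℝ | 2*|y| < |u|}.indicator (fun u => ENNReal.ofReal (2 * ((u:ℝ)^2)⁻¹)) (x + y) := by
  set r := |y| with hr
  have hr0 : (0:ℝ) < r := by linarith
  have hbase := abs_mul_sinc_le x y
  rcases lt_or_ge |x| (r/2) with h | h
  · -- |x| small
    have hxy : r/2 ≤ |x + y| := by
      have h1 : |y| ≤ |x + y| + |x| := by
        calc |y| = |(x + y) + (-x)| := by ring_nf
          _ ≤ |x + y| + |-x| := abs_add_le _ _
          _ = |x + y| + |x| := by rw [abs_neg]
      linarith
    have hF : F (x + y) ≤ 2 / r := by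
      have := F_le_inv (by linarith : (1:ℝ) ≤ r/2) hxy
      rw [inv_div] at this
      linarith
    have hmem : x ∈ Icc (-(2*r)) (2*r) := by
      rw [mem_Icc]
      constructor <;> [linarith [neg_abs_le x]; linarith [le_abs_self x]]
    calc ENNReal.ofReal |_root_.sinc x * _root_.sinc (x+y)|
        ≤ ENNReal.ofReal ((2/r) * F x) := by
          apply ENNReal.ofReal_le_ofReal
          calc |_root_.sinc x * _root_.sinc (x+y)| ≤ F x * F (x+y) := hbase
            _ ≤ F x * (2/r) := mul_le_mul_of_nonneg_left hF (F_nonneg x)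
            _ = (2/r) * F x := by ring
      _ = (Icc (-(2*r)) (2*r)).indicator (fun u => ENNReal.ofReal ((2/r) * F u)) x :=
          (indicator_of_mem hmem (fun u => ENNReal.ofReal ((2/r) * F u))).symm
      _ ≤ _ := le_self_add.trans le_self_add
  · -- |x| large
    have hFx : F x ≤ 2 / r := by
      have := F_le_inv (by linarith : (1:ℝ) ≤ r/2) h
      rw [inv_div] at this
      linarith
    rcases le_or_gt |x + y| (2*r) with h2 | h2
    · have hmem : x + y ∈ Icc (-(2*r)) (2*r) := by
        rw [mem_Icc]
        constructor <;> [linarith [neg_abs_le (x+y)]; linarith [le_abs_self (x+y)]]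
      calc ENNReal.ofReal |_root_.sinc x * _root_.sinc (x+y)|
          ≤ ENNReal.ofReal ((2/r) * F (x+y)) := by
            apply ENNReal.ofReal_le_ofReal
            calc |_root_.sinc x * _root_.sinc (x+y)| ≤ F x * F (x+y) := hbase
              _ ≤ (2/r) * F (x+y) := mul_le_mul_of_nonneg_right hFx (F_nonneg _)
        _ = (Icc (-(2*r)) (2*r)).indicator (fun u => ENNReal.ofReal ((2/r) * F u)) (x+y) :=
            (indicator_of_mem hmem (fun u => ENNReal.ofReal ((2/r) * F u))).symm
        _ ≤ _ := (self_le_add_left _ _).trans le_self_add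
    · have hmem : x + y ∈ {u : ℝ | 2*r < |u|} := h2
      refine le_trans ?_ (le_trans (le_of_eq (indicator_of_mem hmem
        (fun u => ENNReal.ofReal (2 * ((u:ℝ)^2)⁻¹))).symm) (self_le_add_left _ _))
      apply ENNReal.ofReal_le_ofReal
      have hx2 : |x + y| / 2 ≤ |x| := by
        have h1 : |x + y| - |y| ≤ |x| := by
          have := abs_sub_abs_le_abs_sub (x + y) y
          simp only [add_sub_cancel_right] at this
          linarith [neg_abs_le (|x+y| - |y|)]
        linarith
      have hFx' : F x ≤ (|x+y|/2)⁻¹ := F_le_inv (by linarith) hx2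
      have hFxy : F (x+y) ≤ |x+y|⁻¹ := by
        rw [F_eq_inv (by linarith)]
      calc |_root_.sinc x * _root_.sinc (x+y)| ≤ F x * F (x+y) := hbase
        _ ≤ (|x+y|/2)⁻¹ * |x+y|⁻¹ :=
            mul_le_mul hFx' hFxy (F_nonneg _) (by positivity)
        _ = 2 * ((x+y)^2)⁻¹ := by
            have habs : (0:ℝ) < |x + y| := by linarith
            rw [← sq_abs]
            field_simp

lemma measurable_g1 (r : ℝ) :
    Measurable ((Icc (-(2*r)) (2*r)).indicator (fun u => ENNReal.ofReal ((2/r) * F u))) :=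
  Measurable.indicator ((measurable_const.mul F_measurable).ennreal_ofReal) measurableSet_Icc

lemma measurableSet_tail (r : ℝ) : MeasurableSet {u : ℝ | 2*r < |u|} :=
  (isOpen_lt continuous_const continuous_abs).measurableSet

lemma measurable_g3 (r : ℝ) :
    Measurable ({u : ℝ | 2*r < |u|}.indicator (fun u => ENNReal.ofReal (2 * ((u:ℝ)^2)⁻¹))) :=
  Measurable.indicator (by fun_prop) (measurableSet_tail r)

lemma lint_g1 {r : ℝ} (hr : 2 ≤ r) :
    ∫⁻ x, (Icc (-(2*r)) (2*r)).indicator (fun u => ENNReal.ofReal ((2/r) * F u)) x ≤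
      ENNReal.ofReal ((2/r) * (2 + 2 * Real.log (2*r))) := by
  rw [lintegral_indicator measurableSet_Icc]
  have h1 : ∀ u : ℝ, ENNReal.ofReal ((2/r) * F u)
      = ENNReal.ofReal (2/r) * ENNReal.ofReal (F u) := fun u =>
    ENNReal.ofReal_mul (by positivity)
  simp_rw [h1]
  rw [lintegral_const_mul _ F_measurable.ennreal_ofReal]
  rw [ENNReal.ofReal_mul (by positivity)]
  exact mul_le_mul_right (lint_F_le (by linarith)) _

lemma lint_g3 {r : ℝ} (hr : 2 ≤ r) :
    ∫⁻ x, {u : ℝ | 2*r < |u|}.indicator (fun u => ENNReal.ofReal (2 * ((u:ℝ)^2)⁻¹)) x ≤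
      ENNReal.ofReal (2/r) := by
  rw [lintegral_indicator (measurableSet_tail r)]
  have h1 : ∀ u : ℝ, ENNReal.ofReal (2 * ((u:ℝ)^2)⁻¹)
      = ENNReal.ofReal 2 * ENNReal.ofReal ((u^2)⁻¹) := fun u =>
    ENNReal.ofReal_mul (by norm_num)
  simp_rw [h1]
  rw [lintegral_const_mul _ (by fun_prop)]
  calc ENNReal.ofReal 2 * ∫⁻ u in {u : ℝ | 2*r < |u|}, ENNReal.ofReal ((u^2)⁻¹)
      ≤ ENNReal.ofReal 2 * ENNReal.ofReal (2/(2*r)) :=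
        mul_le_mul_right (lint_tail (by linarith)) _
    _ = ENNReal.ofReal (2/r) := by
        rw [← ENNReal.ofReal_mul (by norm_num)]
        congr 1
        field_simp

lemma main1 {y : ℝ} (hy : 2 ≤ |y|) :
    ∫⁻ x : ℝ, ENNReal.ofReal |_root_.sinc x * _root_.sinc (x + y)| ≤
      ENNReal.ofReal ((2/|y|) * (2 + 2 * Real.log (2*|y|)) * 2 + 2/|y|) := by
  set r := |y| with hr
  set g1 := (Icc (-(2*r)) (2*r)).indicator (fun u => ENNReal.ofReal ((2/r) * F u)) with hg1
  set g3 := {u : ℝ | 2*r < |u|}.indicator (fun u => ENNReal.ofReal (2 * ((u:ℝ)^2)⁻¹)) with hg3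
  calc ∫⁻ x : ℝ, ENNReal.ofReal |_root_.sinc x * _root_.sinc (x + y)|
      ≤ ∫⁻ x : ℝ, (g1 x + g1 (x + y) + g3 (x + y)) := lintegral_mono (pointwise_bound hy)
    _ = (∫⁻ x, g1 x) + (∫⁻ x, g1 (x + y)) + ∫⁻ x, g3 (x + y) := by
        have mg1 : Measurable g1 := by rw [hg1]; exact measurable_g1 r
        have m2 : Measurable (fun x => g1 (x + y)) := mg1.comp (measurable_add_const y)
        rw [lintegral_add_left (f := fun x => g1 x + g1 (x + y)) (mg1.add m2), lintegral_add_left mg1]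
    _ = (∫⁻ x, g1 x) + (∫⁻ x, g1 x) + ∫⁻ x, g3 x := by
        rw [lintegral_add_right_eq_self g1 y, lintegral_add_right_eq_self g3 y]
    _ ≤ ENNReal.ofReal ((2/r) * (2 + 2 * Real.log (2*r)))
        + ENNReal.ofReal ((2/r) * (2 + 2 * Real.log (2*r))) + ENNReal.ofReal (2/r) := by
        gcongr
        · exact lint_g1 hy
        · exact lint_g1 hy
        · exact lint_g3 hy
    _ = ENNReal.ofReal ((2/r) * (2 + 2 * Real.log (2*r)) * 2 + 2/r) := by
        have hlog : (0:ℝ) ≤ Real.log (2*r) := Real.log_nonneg (by linarith)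
        have h0 : (0:ℝ) ≤ (2/r) * (2 + 2 * Real.log (2*r)) := by positivity
        rw [← ENNReal.ofReal_add h0 h0, ← ENNReal.ofReal_add (by linarith) (by positivity)]
        congr 1
        ring


lemma lint_Fsq : ∫⁻ u : ℝ, ENNReal.ofReal (F u ^ 2) ≤ ENNReal.ofReal 4 := by
  have hpt : ∀ u : ℝ, ENNReal.ofReal (F u ^ 2) ≤
      (Icc (-1:ℝ) 1).indicator (fun _ => (1:ℝ≥0∞)) u
      + {u : ℝ | 2 * (1/2 : ℝ) < |u|}.indicator (fun u => ENNReal.ofReal ((u^2)⁻¹)) u := by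
    intro u
    rcases le_or_gt |u| 1 with h | h
    · have hmem : u ∈ Icc (-1:ℝ) 1 := by
        rw [mem_Icc]
        constructor <;> [linarith [neg_abs_le u]; linarith [le_abs_self u]]
      calc ENNReal.ofReal (F u ^ 2) ≤ 1 := by
            apply ENNReal.ofReal_le_one.mpr
            have := F_le_one u
            have := F_nonneg u
            nlinarith
        _ = (Icc (-1:ℝ) 1).indicator (fun _ => (1:ℝ≥0∞)) u :=
            (indicator_of_mem hmem (fun _ => (1:ℝ≥0∞))).symm
        _ ≤ _ := le_self_add
    · have hmem : u ∈ {u : ℝ | 2 * (1/2 : ℝ) < |u|} := by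
        simp only [mem_setOf_eq]
        linarith
      calc ENNReal.ofReal (F u ^ 2) = ENNReal.ofReal ((u^2)⁻¹) := by
            rw [F_eq_inv h.le]
            congr 1
            rw [inv_pow, sq_abs]
        _ = {u : ℝ | 2 * (1/2 : ℝ) < |u|}.indicator (fun u => ENNReal.ofReal ((u^2)⁻¹)) u :=
            (indicator_of_mem hmem (fun u => ENNReal.ofReal ((u^2)⁻¹))).symm
        _ ≤ _ := self_le_add_left _ _
  calc ∫⁻ u : ℝ, ENNReal.ofReal (F u ^ 2)
      ≤ ∫⁻ u : ℝ, ((Icc (-1:ℝ) 1).indicator (fun _ => (1:ℝ≥0∞)) u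
        + {u : ℝ | 2 * (1/2 : ℝ) < |u|}.indicator (fun u => ENNReal.ofReal ((u^2)⁻¹)) u) :=
        lintegral_mono hpt
    _ = (∫⁻ u : ℝ, (Icc (-1:ℝ) 1).indicator (fun _ => (1:ℝ≥0∞)) u)
        + ∫⁻ u : ℝ, {u : ℝ | 2 * (1/2 : ℝ) < |u|}.indicator (fun u => ENNReal.ofReal ((u^2)⁻¹)) u :=
        lintegral_add_left (Measurable.indicator measurable_const measurableSet_Icc) _
    _ ≤ ENNReal.ofReal 2 + ENNReal.ofReal 2 := by
        gcongr
        · rw [lintegral_indicator measurableSet_Icc, setLIntegral_one, Real.volume_Icc]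
          apply ENNReal.ofReal_le_ofReal
          norm_num
        · rw [lintegral_indicator (measurableSet_tail (1/2))]
          refine (lint_tail (by norm_num)).trans ?_
          apply ENNReal.ofReal_le_ofReal
          norm_num
    _ = ENNReal.ofReal 4 := by
        rw [← ENNReal.ofReal_add] <;> norm_num

lemma main2 (y : ℝ) :
    ∫⁻ x : ℝ, ENNReal.ofReal |_root_.sinc x * _root_.sinc (x + y)| ≤ ENNReal.ofReal 8 := by
  have hpt : ∀ x : ℝ, ENNReal.ofReal |_root_.sinc x * _root_.sinc (x + y)| ≤
      ENNReal.ofReal (F x ^ 2) + ENNReal.ofReal (F (x + y) ^ 2) := by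
    intro x
    rw [← ENNReal.ofReal_add (by positivity) (by positivity)]
    apply ENNReal.ofReal_le_ofReal
    refine (abs_mul_sinc_le x y).trans ?_
    nlinarith [sq_nonneg (F x - F (x + y)), F_nonneg x, F_nonneg (x + y)]
  calc ∫⁻ x : ℝ, ENNReal.ofReal |_root_.sinc x * _root_.sinc (x + y)|
      ≤ ∫⁻ x : ℝ, (ENNReal.ofReal (F x ^ 2) + ENNReal.ofReal (F (x + y) ^ 2)) :=
        lintegral_mono hpt
    _ = (∫⁻ x : ℝ, ENNReal.ofReal (F x ^ 2)) + ∫⁻ x : ℝ, ENNReal.ofReal (F (x + y) ^ 2) :=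
        lintegral_add_left ((F_measurable.pow_const 2).ennreal_ofReal) _
    _ = (∫⁻ x : ℝ, ENNReal.ofReal (F x ^ 2)) + ∫⁻ x : ℝ, ENNReal.ofReal (F x ^ 2) :=
        congrArg _ (lintegral_add_right_eq_self (fun u => ENNReal.ofReal (F u ^ 2)) y)
    _ ≤ ENNReal.ofReal 4 + ENNReal.ofReal 4 := by gcongr <;> exact lint_Fsq
    _ = ENNReal.ofReal 8 := by rw [← ENNReal.ofReal_add] <;> norm_num



/-- There is a finite constant `C` such that
`∫ |sin(x) sin(x+y)| / |x (x+y)| dx ≤ C log|y|/|y|` when `|y| ≥ e`, and the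
integral is bounded by `C` when `|y| < e`. -/
theorem integral_abs_sinc_sinc_shift_bound :
    ∃ C : ℝ,
      (∀ y : ℝ, Real.exp 1 ≤ |y| →
        ∫⁻ x : ℝ, ENNReal.ofReal |_root_.sinc x * _root_.sinc (x + y)| ≤
          ENNReal.ofReal (C * Real.log |y| / |y|)) ∧
      (∀ y : ℝ, |y| < Real.exp 1 →
        ∫⁻ x : ℝ, ENNReal.ofReal |_root_.sinc x * _root_.sinc (x + y)| ≤ ENNReal.ofReal C) := by
  refine ⟨26, fun y hy => ?_, fun y _ => ?_⟩
  · have h2e : (2:ℝ) ≤ Real.exp 1 := by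
      have := Real.exp_one_gt_d9
      linarith
    have hy2 : 2 ≤ |y| := h2e.trans hy
    have hr0 : (0:ℝ) < |y| := by linarith
    refine (main1 hy2).trans (ENNReal.ofReal_le_ofReal ?_)
    have hlog : 1 ≤ Real.log |y| := (Real.le_log_iff_exp_le hr0).mpr hy
    have hlog2 : Real.log 2 ≤ 1 := (Real.log_le_iff_le_exp (by norm_num)).mpr h2e
    have hsplit : Real.log (2 * |y|) = Real.log 2 + Real.log |y| :=
      Real.log_mul (by norm_num) hr0.ne'
    rw [hsplit]
    have heq : (2/|y|) * (2 + 2 * (Real.log 2 + Real.log |y|)) * 2 + 2/|y|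
        = (4 * (2 + 2 * (Real.log 2 + Real.log |y|)) + 2) / |y| := by
      ring
    rw [heq]
    gcongr
    linarith
  · exact (main2 y).trans (ENNReal.ofReal_le_ofReal (by norm_num))

end
end

section
/- There exists a finite constant C, independent of a, such that for every integer a ≥ 2, Σ_{m=−a}^{a} ∫_{−∞}^{∞} |sin²(x) / (x(x + mπ))| dx ≤ C log²(a). -/
open MeasureTheory Real Set
open scoped BigOperators ENNReal

noncomputable section

namespace SincAux

def G (u : ℝ) : ℝ≥0∞ := min 1 (ENNReal.ofReal |u|)⁻¹

lemma sinc_neg (u : ℝ) : _root_.sinc (-u) = _root_.sinc u := by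
  rcases eq_or_ne u 0 with h | h
  · simp [h]
  · simp [_root_.sinc, h, neg_ne_zero.mpr h, Real.sin_neg, neg_div_neg_eq]

lemma ofReal_abs_sinc_le (u : ℝ) : ENNReal.ofReal |_root_.sinc u| ≤ G u := by
  rcases eq_or_ne u 0 with h | h
  · simp [_root_.sinc, h, G]
  · have hu : 0 < |u| := abs_pos.mpr h
    refine le_min ?_ ?_
    · refine ENNReal.ofReal_le_one.mpr ?_
      rw [_root_.sinc, if_neg h, abs_div, div_le_one hu]
      exact Real.abs_sin_le_abs
    · rw [← ENNReal.ofReal_inv_of_pos hu]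
      refine ENNReal.ofReal_le_ofReal ?_
      rw [_root_.sinc, if_neg h, abs_div, inv_eq_one_div]
      gcongr
      exact Real.abs_sin_le_one u

lemma G_le_one (u : ℝ) : G u ≤ 1 := min_le_left _ _

lemma G_le_inv (u : ℝ) : G u ≤ (ENNReal.ofReal |u|)⁻¹ := min_le_right _ _

lemma G_neg (u : ℝ) : G (-u) = G u := by simp [G, abs_neg]

lemma lintegral_G_Icc_right {R : ℝ} (hR : 1 ≤ R) :
    ∫⁻ x in Icc (1:ℝ) R, G x ≤ ENNReal.ofReal (Real.log R) := by
  have h1 : ∀ x ∈ Icc (1:ℝ) R, G x ≤ ENNReal.ofReal x⁻¹ := by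
    intro x hx
    have hx0 : (0:ℝ) < x := lt_of_lt_of_le one_pos hx.1
    calc G x ≤ (ENNReal.ofReal |x|)⁻¹ := G_le_inv x
    _ = ENNReal.ofReal x⁻¹ := by
        rw [abs_of_pos hx0, ← ENNReal.ofReal_inv_of_pos hx0]
  calc ∫⁻ x in Icc (1:ℝ) R, G x ≤ ∫⁻ x in Icc (1:ℝ) R, ENNReal.ofReal x⁻¹ := by
        refine setLIntegral_mono' measurableSet_Icc h1
  _ = ENNReal.ofReal (∫ x in Icc (1:ℝ) R, x⁻¹) := by
      rw [← ofReal_integral_eq_lintegral_ofReal]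
      · exact (ContinuousOn.integrableOn_compact isCompact_Icc
          (ContinuousOn.inv₀ continuousOn_id (fun x hx => ne_of_gt (lt_of_lt_of_le one_pos hx.1))))
      · filter_upwards [ae_restrict_mem measurableSet_Icc] with x hx
        exact inv_nonneg.mpr (le_trans zero_le_one hx.1)
  _ = ENNReal.ofReal (Real.log R) := by
      rw [integral_Icc_eq_integral_Ioc, ← intervalIntegral.integral_of_le hR,
        integral_inv (by
          intro h
          rcases Set.mem_uIcc.mp h with ⟨h1,h2⟩|⟨h1,h2⟩ <;> linarith)]
      simp

lemma lintegral_G_Icc {R : ℝ} (hR : 1 ≤ R) :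
    ∫⁻ x in Icc (-R) R, G x ≤ ENNReal.ofReal (2 + 2 * Real.log R) := by
  have hsub : Icc (-R) R ⊆ Icc (-R) (-1) ∪ (Icc (-1) 1 ∪ Icc 1 R) := by
    intro x hx
    simp only [mem_union, mem_Icc] at *
    rcases le_total x (-1) with h | h
    · exact Or.inl ⟨hx.1, h⟩
    · rcases le_total x 1 with h' | h'
      · exact Or.inr (Or.inl ⟨h, h'⟩)
      · exact Or.inr (Or.inr ⟨h', hx.2⟩)
  have hneg : ∫⁻ x in Icc (-R) (-1), G x = ∫⁻ x in Icc (1:ℝ) R, G x := by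
    have := (Measure.measurePreserving_neg (volume : Measure ℝ)).setLIntegral_comp_preimage_emb
      (MeasurableEquiv.neg ℝ).measurableEmbedding G (Icc (1:ℝ) R)
    have hpre : (Neg.neg ⁻¹' Icc (1:ℝ) R : Set ℝ) = Icc (-R) (-1) := by
      ext x; simp only [mem_preimage, mem_Icc]; constructor <;> intro h <;> constructor <;> linarith [h.1, h.2]
    rw [← hpre]
    rw [← this]
    refine lintegral_congr fun x => ?_
    exact (G_neg x).symm ▸ rfl
  have hmid : ∫⁻ x in Icc (-1:ℝ) 1, G x ≤ ENNReal.ofReal 2 := by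
    calc ∫⁻ x in Icc (-1:ℝ) 1, G x ≤ ∫⁻ _ in Icc (-1:ℝ) 1, 1 :=
      setLIntegral_mono' measurableSet_Icc (fun x _ => G_le_one x)
    _ = volume (Icc (-1:ℝ) 1) := by simp
    _ = ENNReal.ofReal 2 := by rw [Real.volume_Icc]; norm_num
  have hlogR : 0 ≤ Real.log R := Real.log_nonneg hR
  calc ∫⁻ x in Icc (-R) R, G x ≤ ∫⁻ x in Icc (-R) (-1) ∪ (Icc (-1) 1 ∪ Icc 1 R), G x :=
      lintegral_mono_set hsub
  _ ≤ (∫⁻ x in Icc (-R) (-1), G x) + ((∫⁻ x in Icc (-1:ℝ) 1, G x) + ∫⁻ x in Icc (1:ℝ) R, G x) :=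
      le_trans (lintegral_union_le _ _ _) (add_le_add le_rfl (lintegral_union_le _ _ _))
  _ ≤ ENNReal.ofReal (Real.log R) + (ENNReal.ofReal 2 + ENNReal.ofReal (Real.log R)) := by
      rw [hneg]
      exact add_le_add (lintegral_G_Icc_right hR) (add_le_add hmid (lintegral_G_Icc_right hR))
  _ = ENNReal.ofReal (2 + 2 * Real.log R) := by
      rw [← ENNReal.ofReal_add (by norm_num) hlogR, ← ENNReal.ofReal_add hlogR (by positivity)]
      congr 1; ring

lemma lintegral_inv_sq_Ici {b : ℝ} (hb : 0 < b) :
    ∫⁻ x in Ici b, (ENNReal.ofReal (x ^ 2))⁻¹ ≤ ENNReal.ofReal b⁻¹ := by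
  rw [← restrict_Ioi_eq_restrict_Ici]
  have heq : ∀ x ∈ Ioi b, (ENNReal.ofReal (x ^ 2))⁻¹ = ENNReal.ofReal (x ^ (-2:ℝ)) := by
    intro x hx
    have hx0 : (0:ℝ) < x := hb.trans hx
    rw [Real.rpow_neg hx0.le, ← ENNReal.ofReal_inv_of_pos (by positivity)]
    congr 1
    rw [show ((2:ℝ)) = ((2:ℕ):ℝ) by norm_num, Real.rpow_natCast]
  rw [setLIntegral_congr_fun measurableSet_Ioi heq]
  rw [← ofReal_integral_eq_lintegral_ofReal (integrableOn_Ioi_rpow_of_lt (by norm_num) hb)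
    (by filter_upwards [ae_restrict_mem measurableSet_Ioi] with x hx
        exact Real.rpow_nonneg (hb.trans hx).le _)]
  rw [integral_Ioi_rpow_of_lt (by norm_num) hb]
  norm_num [Real.rpow_neg_one]

lemma main_bound {c : ℝ} (hc : 2 ≤ c) :
    ∫⁻ x : ℝ, G x * G (x + c) ≤ ENNReal.ofReal (12 * (1 + Real.log c) / c) := by
  have hc0 : (0:ℝ) < c := by linarith
  have hR : (1:ℝ) ≤ c/2 := by linarith
  have hc2 : (0:ℝ) < c/2 := by linarith
  have hofr : ((ENNReal.ofReal (c/2))⁻¹) = ENNReal.ofReal (2/c) := by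
    rw [← ENNReal.ofReal_inv_of_pos hc2, inv_div]
  -- bound on piece A
  have hEA : ∫⁻ x in Icc (-(c/2)) (c/2), G x * G (x + c) ≤
      ENNReal.ofReal (2 + 2 * Real.log (c/2)) * ENNReal.ofReal (2/c) := by
    have hpt : ∀ x ∈ Icc (-(c/2)) (c/2), G x * G (x + c) ≤ G x * ENNReal.ofReal (2/c) := by
      intro x hx
      refine mul_le_mul_right ?_ _
      have h1 : c/2 ≤ |x + c| := by
        rw [abs_of_pos (by linarith [hx.1])]; linarith [hx.1]
      calc G (x+c) ≤ (ENNReal.ofReal |x + c|)⁻¹ := G_le_inv _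
      _ ≤ (ENNReal.ofReal (c/2))⁻¹ := ENNReal.inv_le_inv' (ENNReal.ofReal_le_ofReal h1)
      _ = ENNReal.ofReal (2/c) := hofr
    calc ∫⁻ x in Icc (-(c/2)) (c/2), G x * G (x + c)
        ≤ ∫⁻ x in Icc (-(c/2)) (c/2), G x * ENNReal.ofReal (2/c) :=
          setLIntegral_mono' measurableSet_Icc hpt
    _ = (∫⁻ x in Icc (-(c/2)) (c/2), G x) * ENNReal.ofReal (2/c) :=
          lintegral_mul_const' _ _ ENNReal.ofReal_ne_top
    _ ≤ ENNReal.ofReal (2 + 2 * Real.log (c/2)) * ENNReal.ofReal (2/c) :=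
          mul_le_mul_left (lintegral_G_Icc hR) _
  -- bound on piece B
  have htrans : ∫⁻ x in Icc (-(c/2) - c) (c/2 - c), G (x + c) =
      ∫⁻ x in Icc (-(c/2)) (c/2), G x := by
    have := (measurePreserving_add_right (volume : Measure ℝ) c).setLIntegral_comp_preimage_emb
      (measurableEmbedding_addRight c) G (Icc (-(c/2)) (c/2))
    rw [preimage_add_const_Icc] at this
    exact this
  have hEB : ∫⁻ x in Icc (-(c/2) - c) (c/2 - c), G x * G (x + c) ≤
      ENNReal.ofReal (2 + 2 * Real.log (c/2)) * ENNReal.ofReal (2/c) := by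
    have hpt : ∀ x ∈ Icc (-(c/2) - c) (c/2 - c), G x * G (x + c) ≤
        ENNReal.ofReal (2/c) * G (x + c) := by
      intro x hx
      refine mul_le_mul_left ?_ _
      have h1 : c/2 ≤ |x| := by
        rw [abs_of_neg (by nlinarith [hx.2])]; linarith [hx.2]
      calc G x ≤ (ENNReal.ofReal |x|)⁻¹ := G_le_inv _
      _ ≤ (ENNReal.ofReal (c/2))⁻¹ := ENNReal.inv_le_inv' (ENNReal.ofReal_le_ofReal h1)
      _ = ENNReal.ofReal (2/c) := hofr
    calc ∫⁻ x in Icc (-(c/2) - c) (c/2 - c), G x * G (x + c)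
        ≤ ∫⁻ x in Icc (-(c/2) - c) (c/2 - c), ENNReal.ofReal (2/c) * G (x + c) :=
          setLIntegral_mono' measurableSet_Icc hpt
    _ = ENNReal.ofReal (2/c) * ∫⁻ x in Icc (-(c/2) - c) (c/2 - c), G (x + c) :=
          lintegral_const_mul' _ _ ENNReal.ofReal_ne_top
    _ ≤ ENNReal.ofReal (2/c) * ENNReal.ofReal (2 + 2 * Real.log (c/2)) := by
          rw [htrans]; exact mul_le_mul_right (lintegral_G_Icc hR) _
    _ = ENNReal.ofReal (2 + 2 * Real.log (c/2)) * ENNReal.ofReal (2/c) := mul_comm _ _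
  -- piece C1
  have hEC1 : ∫⁻ x in Ici (c/2), G x * G (x + c) ≤ ENNReal.ofReal (2/c) := by
    have hpt : ∀ x ∈ Ici (c/2), G x * G (x + c) ≤ (ENNReal.ofReal (x^2))⁻¹ := by
      intro x hx
      simp only [mem_Ici] at hx
      have hx0 : (0:ℝ) < x := lt_of_lt_of_le hc2 hx
      have h1 : G x ≤ (ENNReal.ofReal x)⁻¹ := by
        calc G x ≤ (ENNReal.ofReal |x|)⁻¹ := G_le_inv _
        _ = (ENNReal.ofReal x)⁻¹ := by rw [abs_of_pos hx0]
      have h2 : G (x + c) ≤ (ENNReal.ofReal x)⁻¹ := by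
        calc G (x+c) ≤ (ENNReal.ofReal |x + c|)⁻¹ := G_le_inv _
        _ ≤ (ENNReal.ofReal x)⁻¹ := by
            refine ENNReal.inv_le_inv' (ENNReal.ofReal_le_ofReal ?_)
            rw [abs_of_pos (by linarith)]; linarith
      calc G x * G (x + c) ≤ (ENNReal.ofReal x)⁻¹ * (ENNReal.ofReal x)⁻¹ :=
            mul_le_mul' h1 h2
      _ = (ENNReal.ofReal x * ENNReal.ofReal x)⁻¹ := by
            rw [ENNReal.mul_inv (Or.inr ENNReal.ofReal_ne_top) (Or.inl ENNReal.ofReal_ne_top)]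
      _ = (ENNReal.ofReal (x^2))⁻¹ := by
            rw [← ENNReal.ofReal_mul hx0.le, sq]
    calc ∫⁻ x in Ici (c/2), G x * G (x + c) ≤ ∫⁻ x in Ici (c/2), (ENNReal.ofReal (x^2))⁻¹ :=
          setLIntegral_mono' measurableSet_Ici hpt
    _ ≤ ENNReal.ofReal (c/2)⁻¹ := lintegral_inv_sq_Ici hc2
    _ = ENNReal.ofReal (2/c) := by rw [inv_div]
  -- piece C2
  have hEC2 : ∫⁻ x in Iic (-(c/2) - c), G x * G (x + c) ≤ ENNReal.ofReal (2/c) := by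
    have hpt : ∀ x ∈ Iic (-(c/2) - c), G x * G (x + c) ≤ (ENNReal.ofReal ((x+c)^2))⁻¹ := by
      intro x hx
      simp only [mem_Iic] at hx
      have hx1 : x + c ≤ -(c/2) := by linarith
      have habs : c/2 ≤ |x + c| := by rw [abs_of_neg (by linarith)]; linarith
      have h2 : G (x + c) ≤ (ENNReal.ofReal |x + c|)⁻¹ := G_le_inv _
      have h1 : G x ≤ (ENNReal.ofReal |x + c|)⁻¹ := by
        calc G x ≤ (ENNReal.ofReal |x|)⁻¹ := G_le_inv _
        _ ≤ (ENNReal.ofReal |x + c|)⁻¹ := by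
            refine ENNReal.inv_le_inv' (ENNReal.ofReal_le_ofReal ?_)
            rw [abs_of_neg (by linarith), abs_of_neg (by linarith)]; linarith
      calc G x * G (x + c) ≤ (ENNReal.ofReal |x + c|)⁻¹ * (ENNReal.ofReal |x + c|)⁻¹ :=
            mul_le_mul' h1 h2
      _ = (ENNReal.ofReal |x + c| * ENNReal.ofReal |x + c|)⁻¹ := by
            rw [ENNReal.mul_inv (Or.inr ENNReal.ofReal_ne_top) (Or.inl ENNReal.ofReal_ne_top)]
      _ = (ENNReal.ofReal ((x+c)^2))⁻¹ := by
            rw [← ENNReal.ofReal_mul (abs_nonneg _), abs_mul_abs_self, sq]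
    have hstep1 : ∫⁻ x in Iic (-(c/2) - c), (ENNReal.ofReal ((x+c)^2))⁻¹ =
        ∫⁻ y in Iic (-(c/2)), (ENNReal.ofReal (y^2))⁻¹ := by
      have := (measurePreserving_add_right (volume : Measure ℝ) c).setLIntegral_comp_preimage_emb
        (measurableEmbedding_addRight c) (fun y => (ENNReal.ofReal (y^2))⁻¹) (Iic (-(c/2)))
      rw [preimage_add_const_Iic] at this
      exact this
    have hstep2 : ∫⁻ y in Iic (-(c/2)), (ENNReal.ofReal (y^2))⁻¹ =
        ∫⁻ z in Ici (c/2), (ENNReal.ofReal (z^2))⁻¹ := by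
      have := (Measure.measurePreserving_neg (volume : Measure ℝ)).setLIntegral_comp_preimage_emb
        (MeasurableEquiv.neg ℝ).measurableEmbedding (fun z => (ENNReal.ofReal (z^2))⁻¹)
        (Ici (c/2))
      have hpre : (Neg.neg ⁻¹' Ici (c/2) : Set ℝ) = Iic (-(c/2)) := by
        ext y; simp only [mem_preimage, mem_Ici, mem_Iic]; constructor <;> intro h <;> linarith
      rw [hpre] at this
      simp only [neg_sq] at this
      exact this
    calc ∫⁻ x in Iic (-(c/2) - c), G x * G (x + c)
        ≤ ∫⁻ x in Iic (-(c/2) - c), (ENNReal.ofReal ((x+c)^2))⁻¹ :=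
          setLIntegral_mono' measurableSet_Iic hpt
    _ = ∫⁻ z in Ici (c/2), (ENNReal.ofReal (z^2))⁻¹ := by rw [hstep1, hstep2]
    _ ≤ ENNReal.ofReal (c/2)⁻¹ := lintegral_inv_sq_Ici hc2
    _ = ENNReal.ofReal (2/c) := by rw [inv_div]
  -- cover
  have hcover : (univ : Set ℝ) ⊆ Iic (-(c/2) - c) ∪ (Icc (-(c/2) - c) (c/2 - c) ∪
      (Icc (-(c/2)) (c/2) ∪ Ici (c/2))) := by
    intro x _
    simp only [mem_union, mem_Iic, mem_Icc, mem_Ici]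
    rcases le_total x (-(c/2) - c) with h | h
    · exact Or.inl h
    rcases le_total x (c/2 - c) with h' | h'
    · exact Or.inr (Or.inl ⟨h, h'⟩)
    rcases le_total x (c/2) with h'' | h''
    · exact Or.inr (Or.inr (Or.inl ⟨by linarith, h''⟩))
    · exact Or.inr (Or.inr (Or.inr h''))
  have hL0 : 0 ≤ Real.log (c/2) := Real.log_nonneg hR
  have hL : Real.log (c/2) ≤ Real.log c := Real.log_le_log (by positivity) (by linarith)
  have hlogc : 0 ≤ Real.log c := Real.log_nonneg (by linarith)
  calc ∫⁻ x : ℝ, G x * G (x + c) = ∫⁻ x in (univ : Set ℝ), G x * G (x + c) := by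
        rw [setLIntegral_univ]
  _ ≤ ∫⁻ x in Iic (-(c/2) - c) ∪ (Icc (-(c/2) - c) (c/2 - c) ∪
      (Icc (-(c/2)) (c/2) ∪ Ici (c/2))), G x * G (x + c) := lintegral_mono_set hcover
  _ ≤ (∫⁻ x in Iic (-(c/2) - c), G x * G (x + c)) +
      ((∫⁻ x in Icc (-(c/2) - c) (c/2 - c), G x * G (x + c)) +
       ((∫⁻ x in Icc (-(c/2)) (c/2), G x * G (x + c)) +
        (∫⁻ x in Ici (c/2), G x * G (x + c)))) := by
      refine le_trans (lintegral_union_le _ _ _) ?_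
      refine add_le_add le_rfl ?_
      refine le_trans (lintegral_union_le _ _ _) ?_
      exact add_le_add le_rfl (lintegral_union_le _ _ _)
  _ ≤ ENNReal.ofReal (2/c) + (ENNReal.ofReal (2 + 2 * Real.log (c/2)) * ENNReal.ofReal (2/c) +
      (ENNReal.ofReal (2 + 2 * Real.log (c/2)) * ENNReal.ofReal (2/c) + ENNReal.ofReal (2/c))) := by
      exact add_le_add hEC2 (add_le_add hEB (add_le_add hEA hEC1))
  _ = ENNReal.ofReal (2/c + ((2 + 2 * Real.log (c/2)) * (2/c) + ((2 + 2 * Real.log (c/2)) * (2/c) + 2/c))) := by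
      have hterm : (0:ℝ) ≤ (2 + 2 * Real.log (c/2)) * (2/c) :=
        mul_nonneg (by linarith) (by positivity)
      rw [← ENNReal.ofReal_mul (by linarith)]
      rw [← ENNReal.ofReal_add hterm (by positivity),
        ← ENNReal.ofReal_add hterm (add_nonneg hterm (by positivity)),
        ← ENNReal.ofReal_add (by positivity) (add_nonneg hterm (add_nonneg hterm (by positivity)))]
  _ ≤ ENNReal.ofReal (12 * (1 + Real.log c) / c) := by
      refine ENNReal.ofReal_le_ofReal ?_
      rw [show 2/c + ((2 + 2 * Real.log (c/2)) * (2/c) + ((2 + 2 * Real.log (c/2)) * (2/c) + 2/c))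
        = (12 + 8 * Real.log (c/2)) / c by ring,
        show 12 * (1 + Real.log c) / c = (12 + 12 * Real.log c) / c by ring]
      gcongr
      linarith

lemma ofReal_abs_sinc_mul_le (x c : ℝ) :
    ENNReal.ofReal |_root_.sinc x * _root_.sinc (x + c)| ≤ G x * G (x + c) := by
  rw [abs_mul, ENNReal.ofReal_mul (abs_nonneg _)]
  exact mul_le_mul' (ofReal_abs_sinc_le x) (ofReal_abs_sinc_le (x + c))

lemma I_le {c : ℝ} (hc : 2 ≤ c) :
    ∫⁻ x : ℝ, ENNReal.ofReal |_root_.sinc x * _root_.sinc (x + c)| ≤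
      ENNReal.ofReal (12 * (1 + Real.log c) / c) :=
  le_trans (lintegral_mono fun x => ofReal_abs_sinc_mul_le x c) (main_bound hc)

lemma I_neg (c : ℝ) :
    ∫⁻ x : ℝ, ENNReal.ofReal |_root_.sinc x * _root_.sinc (x + c)| =
      ∫⁻ x : ℝ, ENNReal.ofReal |_root_.sinc x * _root_.sinc (x + -c)| := by
  have := (Measure.measurePreserving_neg (volume : Measure ℝ)).lintegral_comp_emb
    (MeasurableEquiv.neg ℝ).measurableEmbedding
    (fun x => ENNReal.ofReal |_root_.sinc x * _root_.sinc (x + c)|)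
  rw [← this]
  refine lintegral_congr fun x => ?_
  have h1 : _root_.sinc (-x) = _root_.sinc x := sinc_neg x
  have h2 : _root_.sinc (-x + c) = _root_.sinc (x + -c) := by
    rw [show (-x + c : ℝ) = -(x + -c) by ring, sinc_neg]
  simp only [h1, h2]

lemma I_zero : ∫⁻ x : ℝ, ENNReal.ofReal |_root_.sinc x * _root_.sinc x| ≤ ENNReal.ofReal 4 := by
  have hGsq : ∀ x : ℝ, x ≠ 0 → G x * G x ≤ (ENNReal.ofReal (x^2))⁻¹ := by
    intro x hx
    calc G x * G x ≤ (ENNReal.ofReal |x|)⁻¹ * (ENNReal.ofReal |x|)⁻¹ :=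
        mul_le_mul' (G_le_inv x) (G_le_inv x)
    _ = (ENNReal.ofReal |x| * ENNReal.ofReal |x|)⁻¹ := by
        rw [ENNReal.mul_inv (Or.inr ENNReal.ofReal_ne_top) (Or.inl ENNReal.ofReal_ne_top)]
    _ = (ENNReal.ofReal (x^2))⁻¹ := by
        rw [← ENNReal.ofReal_mul (abs_nonneg _), abs_mul_abs_self, sq]
  have hcover : (univ : Set ℝ) ⊆ Iic (-1:ℝ) ∪ (Icc (-1:ℝ) 1 ∪ Ici (1:ℝ)) := by
    intro x _
    simp only [mem_union, mem_Iic, mem_Icc, mem_Ici]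
    rcases le_total x (-1:ℝ) with h | h
    · exact Or.inl h
    rcases le_total x (1:ℝ) with h' | h'
    · exact Or.inr (Or.inl ⟨h, h'⟩)
    · exact Or.inr (Or.inr h')
  have hIci : ∫⁻ x in Ici (1:ℝ), G x * G x ≤ ENNReal.ofReal 1 := by
    calc ∫⁻ x in Ici (1:ℝ), G x * G x ≤ ∫⁻ x in Ici (1:ℝ), (ENNReal.ofReal (x^2))⁻¹ :=
        setLIntegral_mono' measurableSet_Ici
          (fun x hx => hGsq x (by intro h; rw [h] at hx; exact absurd hx.out (by norm_num)))
    _ ≤ ENNReal.ofReal (1:ℝ)⁻¹ := lintegral_inv_sq_Ici one_pos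
    _ = ENNReal.ofReal 1 := by norm_num
  have hIic : ∫⁻ x in Iic (-1:ℝ), G x * G x ≤ ENNReal.ofReal 1 := by
    calc ∫⁻ x in Iic (-1:ℝ), G x * G x ≤ ∫⁻ x in Iic (-1:ℝ), (ENNReal.ofReal (x^2))⁻¹ :=
        setLIntegral_mono' measurableSet_Iic
          (fun x hx => hGsq x (by intro h; rw [h] at hx; exact absurd hx.out (by norm_num)))
    _ = ∫⁻ x in Ici (1:ℝ), (ENNReal.ofReal (x^2))⁻¹ := by
        have := (Measure.measurePreserving_neg (volume : Measure ℝ)).setLIntegral_comp_preimage_emb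
          (MeasurableEquiv.neg ℝ).measurableEmbedding (fun z => (ENNReal.ofReal (z^2))⁻¹)
          (Ici (1:ℝ))
        have hpre : (Neg.neg ⁻¹' Ici (1:ℝ) : Set ℝ) = Iic (-1:ℝ) := by
          ext y; simp only [mem_preimage, mem_Ici, mem_Iic]; constructor <;> intro h <;> linarith
        rw [hpre] at this
        simp only [neg_sq] at this
        exact this
    _ ≤ ENNReal.ofReal (1:ℝ)⁻¹ := lintegral_inv_sq_Ici one_pos
    _ = ENNReal.ofReal 1 := by norm_num
  have hmid : ∫⁻ x in Icc (-1:ℝ) 1, G x * G x ≤ ENNReal.ofReal 2 := by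
    calc ∫⁻ x in Icc (-1:ℝ) 1, G x * G x ≤ ∫⁻ _ in Icc (-1:ℝ) 1, 1 :=
        setLIntegral_mono' measurableSet_Icc
          (fun x _ => le_trans (mul_le_mul' (G_le_one x) (G_le_one x)) (by simp))
    _ = volume (Icc (-1:ℝ) 1) := by simp
    _ = ENNReal.ofReal 2 := by rw [Real.volume_Icc]; norm_num
  calc ∫⁻ x : ℝ, ENNReal.ofReal |_root_.sinc x * _root_.sinc x|
      ≤ ∫⁻ x : ℝ, G x * G x := by
        refine lintegral_mono fun x => ?_
        have := ofReal_abs_sinc_mul_le x 0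
        simpa using this
  _ = ∫⁻ x in (univ : Set ℝ), G x * G x := (setLIntegral_univ _).symm
  _ ≤ ∫⁻ x in Iic (-1:ℝ) ∪ (Icc (-1:ℝ) 1 ∪ Ici (1:ℝ)), G x * G x := lintegral_mono_set hcover
  _ ≤ (∫⁻ x in Iic (-1:ℝ), G x * G x) + ((∫⁻ x in Icc (-1:ℝ) 1, G x * G x) +
        (∫⁻ x in Ici (1:ℝ), G x * G x)) :=
      le_trans (lintegral_union_le _ _ _) (add_le_add le_rfl (lintegral_union_le _ _ _))
  _ ≤ ENNReal.ofReal 1 + (ENNReal.ofReal 2 + ENNReal.ofReal 1) :=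
      add_le_add hIic (add_le_add hmid hIci)
  _ = ENNReal.ofReal 4 := by
      rw [← ENNReal.ofReal_add (by norm_num) (by norm_num),
        ← ENNReal.ofReal_add (by norm_num) (by norm_num)]
      norm_num

lemma harm : ∀ a : ℤ, 1 ≤ a →
    (∑ m ∈ Finset.Icc (1:ℤ) a, ((m:ℝ))⁻¹) ≤ 1 + Real.log a := by
  intro a
  refine Int.le_induction
    (motive := fun n (_ : 1 ≤ n) => (∑ m ∈ Finset.Icc (1:ℤ) n, ((m:ℝ))⁻¹) ≤ 1 + Real.log n)
    ?_ (fun a ha ih => ?_) a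
  · simp [Finset.Icc_self]
  · have hicc : Finset.Icc (1:ℤ) (a+1) = insert (a+1) (Finset.Icc 1 a) := by
      ext m; simp only [Finset.mem_Icc, Finset.mem_insert]; omega
    have hnotmem : (a+1) ∉ Finset.Icc (1:ℤ) a := by simp
    rw [hicc, Finset.sum_insert hnotmem]
    have haR : (1:ℝ) ≤ (a:ℝ) := by exact_mod_cast ha
    have hlog : ((a:ℝ)+1)⁻¹ ≤ Real.log ((a:ℝ)+1) - Real.log (a:ℝ) := by
      have h := Real.log_le_sub_one_of_pos (show (0:ℝ) < (a:ℝ)/((a:ℝ)+1) by positivity)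
      rw [Real.log_div (by linarith) (by linarith)] at h
      have : (a:ℝ)/((a:ℝ)+1) - 1 = -(((a:ℝ)+1)⁻¹) := by field_simp; ring
      rw [this] at h
      linarith
    have h2 := ih
    push_cast
    push_cast at h2
    linarith
end SincAux

open SincAux in
/-- There is a finite constant `C`, independent of `a`, such that for every
integer `a ≥ 2`,
`Σ_{m=-a}^{a} ∫ |sin²(x) / (x(x+mπ))| dx ≤ C log²(a)`. -/
theorem sum_integral_sinc_shift_le_log_sq :
    ∃ C : ℝ,
      ∀ a : ℤ, 2 ≤ a →
        ∑ m ∈ Finset.Icc (-a) a,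
            ∫⁻ x : ℝ, ENNReal.ofReal |_root_.sinc x * _root_.sinc (x + (m : ℝ) * π)| ≤
          ENNReal.ofReal (C * (Real.log a) ^ 2) := by
  refine ⟨600, fun a ha => ?_⟩
  have haR : (2:ℝ) ≤ (a:ℝ) := by exact_mod_cast ha
  have hlogA : (0:ℝ) ≤ Real.log a := Real.log_nonneg (by linarith)
  set K : ℝ := 12 * (3 + Real.log a) with hK
  have hK0 : 0 ≤ K := by rw [hK]; nlinarith
  set B : ℤ → ℝ := fun m => if m = 0 then 4 else K / |(m:ℝ)| with hB
  have hB0 : ∀ m : ℤ, 0 ≤ B m := by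
    intro m
    by_cases h : m = 0
    · simp [hB, h]
    · simp only [hB, h, if_false]
      positivity
  have hpos : ∀ m : ℤ, 1 ≤ m → m ≤ a →
      (∫⁻ x : ℝ, ENNReal.ofReal |_root_.sinc x * _root_.sinc (x + (m:ℝ) * π)|) ≤
        ENNReal.ofReal (K / (m:ℝ)) := by
    intro m h1 h2
    have hmR : (1:ℝ) ≤ (m:ℝ) := by exact_mod_cast h1
    have hc : (2:ℝ) ≤ (m:ℝ) * π := by nlinarith [Real.two_le_pi]
    refine le_trans (I_le hc) (ENNReal.ofReal_le_ofReal ?_)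
    have hmpos : (0:ℝ) < (m:ℝ) := by linarith
    have hlogm : Real.log ((m:ℝ)*π) = Real.log (m:ℝ) + Real.log π :=
      Real.log_mul (ne_of_gt hmpos) (ne_of_gt Real.pi_pos)
    have hlogpi : Real.log π ≤ 2 := by
      have h4 : Real.log π ≤ Real.log 4 := Real.log_le_log Real.pi_pos Real.pi_le_four
      have h42 : Real.log 4 = 2 * Real.log 2 := by
        rw [show (4:ℝ) = 2^2 by norm_num, Real.log_pow]; push_cast; ring
      have h2' : Real.log 2 ≤ 1 := by
        linarith [Real.log_le_sub_one_of_pos (by norm_num : (0:ℝ) < 2)]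
      linarith
    have hlogma : Real.log (m:ℝ) ≤ Real.log (a:ℝ) :=
      Real.log_le_log hmpos (by exact_mod_cast h2)
    have hnum : 12 * (1 + Real.log ((m:ℝ)*π)) ≤ K := by
      rw [hK, hlogm]; linarith
    have hnum0 : 0 ≤ 12 * (1 + Real.log ((m:ℝ)*π)) := by
      have : 0 ≤ Real.log ((m:ℝ)*π) := Real.log_nonneg (by linarith)
      linarith
    calc 12 * (1 + Real.log ((m:ℝ)*π)) / ((m:ℝ)*π) ≤ K / ((m:ℝ)*π) := by
          gcongr
    _ ≤ K / (m:ℝ) := by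
          have hple : (m:ℝ) ≤ (m:ℝ)*π := by nlinarith [Real.two_le_pi]
          gcongr
  have hterm : ∀ m ∈ Finset.Icc (-a) a,
      (∫⁻ x : ℝ, ENNReal.ofReal |_root_.sinc x * _root_.sinc (x + (m:ℝ)*π)|) ≤ ENNReal.ofReal (B m) := by
    intro m hm
    rw [Finset.mem_Icc] at hm
    rcases lt_trichotomy m 0 with hneg | hzero | hposm
    · have h1 : (1:ℤ) ≤ -m := by omega
      have h2 : -m ≤ a := by omega
      have heq : (∫⁻ x : ℝ, ENNReal.ofReal |_root_.sinc x * _root_.sinc (x + (m:ℝ)*π)|) =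
          ∫⁻ x : ℝ, ENNReal.ofReal |_root_.sinc x * _root_.sinc (x + ((-m : ℤ):ℝ)*π)| := by
        rw [I_neg ((m:ℝ)*π)]
        have : (-((m:ℝ)*π)) = ((-m : ℤ):ℝ)*π := by push_cast; ring
        rw [← this]
      rw [heq]
      refine le_trans (hpos (-m) h1 h2) (le_of_eq ?_)
      have hmne : m ≠ 0 := by omega
      have habs : |(m:ℝ)| = ((-m : ℤ):ℝ) := by
        push_cast
        rw [abs_of_neg (by exact_mod_cast hneg)]
      simp only [hB, hmne, if_false, habs]
    · subst hzero
      simp only [Int.cast_zero, zero_mul, add_zero]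
      refine le_trans I_zero (le_of_eq ?_)
      simp [hB]
    · have h1 : (1:ℤ) ≤ m := hposm
      refine le_trans (hpos m h1 hm.2) (le_of_eq ?_)
      have hmne : m ≠ 0 := by omega
      have habs : |(m:ℝ)| = (m:ℝ) := abs_of_pos (by exact_mod_cast hposm)
      simp only [hB, hmne, if_false, habs]
  calc ∑ m ∈ Finset.Icc (-a) a,
        ∫⁻ x : ℝ, ENNReal.ofReal |_root_.sinc x * _root_.sinc (x + (m : ℝ) * π)|
      ≤ ∑ m ∈ Finset.Icc (-a) a, ENNReal.ofReal (B m) := Finset.sum_le_sum hterm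
  _ = ENNReal.ofReal (∑ m ∈ Finset.Icc (-a) a, B m) :=
      (ENNReal.ofReal_sum_of_nonneg (fun m _ => hB0 m)).symm
  _ ≤ ENNReal.ofReal (600 * (Real.log a) ^ 2) := by
      refine ENNReal.ofReal_le_ofReal ?_
      have hsplit : Finset.Icc (-a) a = Finset.Icc (-a) (-1) ∪ Finset.Icc 0 a := by
        ext m; simp only [Finset.mem_Icc, Finset.mem_union]; omega
      have hdisj : Disjoint (Finset.Icc (-a) (-1)) (Finset.Icc (0:ℤ) a) := by
        rw [Finset.disjoint_left]
        intro m h1 h2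
        rw [Finset.mem_Icc] at h1 h2
        omega
      rw [hsplit, Finset.sum_union hdisj]
      have himg : Finset.Icc (-a) (-1) = Finset.image Neg.neg (Finset.Icc 1 a) := by
        ext m
        simp only [Finset.mem_image, Finset.mem_Icc]
        constructor
        · intro h; exact ⟨-m, by omega, by omega⟩
        · rintro ⟨k, hk, rfl⟩; omega
      rw [himg, Finset.sum_image (by intro x _ y _ h; exact neg_injective h)]
      have hBneg : ∀ k : ℤ, B (-k) = B k := by
        intro k
        by_cases h : k = 0
        · simp [hB, h]
        · simp only [hB, h, if_false, neg_eq_zero, Int.cast_neg, abs_neg]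
      simp only [hBneg]
      have h0a : Finset.Icc (0:ℤ) a = insert 0 (Finset.Icc 1 a) := by
        ext m; simp only [Finset.mem_Icc, Finset.mem_insert]; omega
      rw [h0a, Finset.sum_insert (by simp)]
      have hB0' : B 0 = 4 := by simp [hB]
      have hBsum : ∑ m ∈ Finset.Icc (1:ℤ) a, B m =
          K * ∑ m ∈ Finset.Icc (1:ℤ) a, ((m:ℝ))⁻¹ := by
        rw [Finset.mul_sum]
        refine Finset.sum_congr rfl fun m hm => ?_
        rw [Finset.mem_Icc] at hm
        have hmne : m ≠ 0 := by omega
        have habs : |(m:ℝ)| = (m:ℝ) := abs_of_pos (by exact_mod_cast hm.1)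
        simp only [hB, hmne, if_false, habs, div_eq_mul_inv]
      rw [hB0', hBsum]
      have hharm := harm a (by omega)
      have hsum0 : 0 ≤ ∑ m ∈ Finset.Icc (1:ℤ) a, ((m:ℝ))⁻¹ := by
        refine Finset.sum_nonneg fun m hm => ?_
        rw [Finset.mem_Icc] at hm
        have : (0:ℝ) < (m:ℝ) := by exact_mod_cast hm.1
        positivity
      have hKs : K * (∑ m ∈ Finset.Icc (1:ℤ) a, ((m:ℝ))⁻¹) ≤ K * (1 + Real.log a) :=
        mul_le_mul_of_nonneg_left hharm hK0
      have hL12 : (1/2 : ℝ) ≤ Real.log a := by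
        have h2a : Real.log 2 ≤ Real.log a := Real.log_le_log (by norm_num) haR
        have := Real.log_two_gt_d9
        linarith
      rw [hK] at hKs ⊢
      nlinarith [sq_nonneg (Real.log a - 1/2), sq_nonneg (Real.log a)]

end
end

section
/- There exists a finite constant C such that for every integer a ≥ 1, Σ_{m=−a}^{a} ( ∫_{−∞}^{∞} sin²(x)/|x(x+mπ)| dx ) · ( ∫_{−∞}^{∞} sin²(y)/|y(y+mπ)| dy ) ≤ C; in particular the bound is uniform in a. -/
open MeasureTheory Real
open scoped BigOperators
open scoped ENNReal

noncomputable section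

namespace SincShiftAux

/-- The elementary majorant `min 1 |u|⁻¹` of `|_root_.sinc|`. -/
def psi (u : ℝ) : ℝ := min 1 |u|⁻¹

lemma psi_nonneg (u : ℝ) : 0 ≤ psi u := le_min zero_le_one (inv_nonneg.2 (abs_nonneg u))

lemma psi_le_one (u : ℝ) : psi u ≤ 1 := min_le_left _ _

lemma psi_pos {u : ℝ} (hu : u ≠ 0) : 0 < psi u :=
  lt_min one_pos (inv_pos.2 (abs_pos.2 hu))

lemma abs_sinc_le {u : ℝ} (hu : u ≠ 0) : |_root_.sinc u| ≤ psi u := by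
  rw [_root_.sinc, if_neg hu, abs_div]
  have h0 : 0 < |u| := abs_pos.2 hu
  refine le_min ?_ ?_
  · rw [div_le_one h0]; exact Real.abs_sin_le_abs
  · rw [div_le_iff₀ h0, inv_mul_cancel₀ h0.ne']
    exact Real.abs_sin_le_one u

/-- The integrable majorant `psi ^ (5/4)`. -/
def rho (u : ℝ) : ℝ := psi u ^ ((5 : ℝ)/4)

lemma rho_nonneg (u : ℝ) : 0 ≤ rho u := Real.rpow_nonneg (psi_nonneg u) _

lemma measurable_psi : Measurable psi := measurable_const.min (measurable_id.abs.inv)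

lemma measurable_rho : Measurable rho :=
  (Real.continuous_rpow_const (by norm_num)).measurable.comp measurable_psi

/-- Key pointwise bound: splitting the product of majorants of the two _root_.sinc factors. -/
lemma key_pointwise {c x : ℝ} (hc : 2 ≤ |c|) (hx : x ≠ 0) (hxc : x + c ≠ 0) :
    |_root_.sinc x * _root_.sinc (x + c)| ≤ (2/|c|) ^ ((3 : ℝ)/4) * (rho x + rho (x + c)) := by
  have hcpos : (0:ℝ) < |c| := lt_of_lt_of_le two_pos hc
  set t := psi x with htdef
  set s := psi (x + c) with hsdef
  have ht0 : 0 < t := psi_pos hx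
  have hs0 : 0 < s := psi_pos hxc
  have hmin : min t s ≤ 2/|c| := by
    rcases le_or_gt (|c|/2) |x| with h | h
    · refine min_le_of_left_le (le_trans (min_le_right _ _) ?_)
      rw [inv_le_comm₀ (lt_of_lt_of_le (by linarith) h) (by positivity)]
      rw [inv_div]
      exact h
    · refine min_le_of_right_le (le_trans (min_le_right _ _) ?_)
      have hxc2 : |c|/2 ≤ |x + c| := by
        have h1 : |c| ≤ |x + c| + |x| := by
          have : |(x + c) - x| ≤ |x + c| + |x| := abs_sub _ _
          simpa using this
        linarith
      rw [inv_le_comm₀ (lt_of_lt_of_le (by linarith) hxc2) (by positivity)]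
      rw [inv_div]
      exact hxc2
  have hprod : |_root_.sinc x * _root_.sinc (x + c)| ≤ t * s := by
    rw [abs_mul]
    exact mul_le_mul (abs_sinc_le hx) (abs_sinc_le hxc) (abs_nonneg _) (psi_nonneg x)
  refine hprod.trans ?_
  have main : ∀ u v : ℝ, 0 < u → 0 < v → u ≤ v → u ≤ 2/|c| →
      u * v ≤ (2/|c|) ^ ((3:ℝ)/4) * (u ^ ((5:ℝ)/4) + v ^ ((5:ℝ)/4)) := by
    intro u v hu hv huv hu2
    have h1 : u * v = u ^ ((3:ℝ)/4) * (u ^ ((1:ℝ)/4) * v) := by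
      rw [← mul_assoc, ← Real.rpow_add hu]
      norm_num
    rw [h1]
    have h2 : u ^ ((3:ℝ)/4) * (u ^ ((1:ℝ)/4) * v) ≤
        (2/|c|) ^ ((3:ℝ)/4) * (v ^ ((1:ℝ)/4) * v) := by
      apply mul_le_mul
      · exact Real.rpow_le_rpow hu.le hu2 (by norm_num)
      · exact mul_le_mul_of_nonneg_right (Real.rpow_le_rpow hu.le huv (by norm_num)) hv.le
      · positivity
      · positivity
    refine h2.trans ?_
    have h3 : v ^ ((1:ℝ)/4) * v = v ^ ((5:ℝ)/4) := by
      nth_rewrite 2 [← Real.rpow_one v]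
      rw [← Real.rpow_add hv]; norm_num
    rw [h3]
    have h4 : (0:ℝ) ≤ u ^ ((5:ℝ)/4) := Real.rpow_nonneg hu.le _
    nlinarith [Real.rpow_nonneg (le_of_lt (by positivity : (0:ℝ) < 2/|c|)) ((3:ℝ)/4)]
  rcases le_total t s with h | h
  · have := main t s ht0 hs0 h (by rwa [min_eq_left h] at hmin)
    simpa [rho, htdef, hsdef] using this
  · have := main s t hs0 ht0 h (by rwa [min_eq_right h] at hmin)
    rw [mul_comm t s]
    simpa [rho, htdef, hsdef, add_comm] using this

/-- Auxiliary integrand for the tail. -/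
def tailFn (x : ℝ) : ℝ≥0∞ := ENNReal.ofReal ((x⁻¹) ^ ((5:ℝ)/4))

lemma measurable_tailFn : Measurable tailFn :=
  ENNReal.measurable_ofReal.comp
    ((Real.continuous_rpow_const (by norm_num)).measurable.comp measurable_inv)

lemma tail_lintegral : ∫⁻ x in Set.Ioi (1:ℝ), tailFn x = 4 := by
  have hint : IntegrableOn (fun x : ℝ => (x⁻¹) ^ ((5:ℝ)/4)) (Set.Ioi 1) := by
    refine (integrableOn_Ioi_rpow_of_lt (a := -(5/4)) (by norm_num) one_pos).congr_fun
      (fun x hx => ?_) measurableSet_Ioi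
    have hx0 : (0:ℝ) < x := lt_trans one_pos hx
    rw [Real.inv_rpow hx0.le, ← Real.rpow_neg hx0.le]
  have hpos : 0 ≤ᶠ[ae (volume.restrict (Set.Ioi (1:ℝ)))] fun x : ℝ => (x⁻¹) ^ ((5:ℝ)/4) := by
    filter_upwards [ae_restrict_mem measurableSet_Ioi] with x hx
    have hx0 : (0:ℝ) < x := lt_trans one_pos hx
    positivity
  rw [show (∫⁻ x in Set.Ioi (1:ℝ), tailFn x) = ∫⁻ x in Set.Ioi (1:ℝ),
    ENNReal.ofReal ((x⁻¹) ^ ((5:ℝ)/4)) from rfl, ← ofReal_integral_eq_lintegral_ofReal hint hpos]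
  have heq : ∫ x in Set.Ioi (1:ℝ), (x⁻¹) ^ ((5:ℝ)/4) =
      ∫ x in Set.Ioi (1:ℝ), x ^ (-(5/4) : ℝ) := by
    refine setIntegral_congr_fun measurableSet_Ioi (fun x hx => ?_)
    have hx0 : (0:ℝ) < x := lt_trans one_pos hx
    rw [Real.inv_rpow hx0.le, ← Real.rpow_neg hx0.le]
  rw [heq, integral_Ioi_rpow_of_lt (by norm_num) one_pos]
  norm_num

lemma rho_lintegral_le : ∫⁻ x : ℝ, ENNReal.ofReal (rho x) ≤ 10 := by
  set A := (Set.Icc (-1:ℝ) 1).indicator (fun _ => (1:ℝ≥0∞)) with hA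
  set B := (Set.Ioi (1:ℝ)).indicator tailFn with hB
  set C := fun x : ℝ => (Set.Ioi (1:ℝ)).indicator tailFn (-x) with hC
  have hbound : ∀ x : ℝ, ENNReal.ofReal (rho x) ≤ A x + B x + C x := by
    intro x
    rcases lt_or_ge x (-1) with h | h
    · refine le_trans ?_ (le_add_of_nonneg_left zero_le)
      have hm : -x ∈ Set.Ioi (1:ℝ) := by simp only [Set.mem_Ioi]; linarith
      rw [hC]
      simp only []
      rw [Set.indicator_of_mem hm, tailFn]
      apply ENNReal.ofReal_le_ofReal
      refine Real.rpow_le_rpow (psi_nonneg x) ?_ (by norm_num)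
      have hax : |x| = -x := abs_of_neg (by linarith)
      simp only [psi, hax]
      exact min_le_right _ _
    · rcases le_or_gt x 1 with h2 | h2
      · refine le_trans ?_ (le_add_of_nonneg_right zero_le)
        refine le_trans ?_ (le_add_of_nonneg_right zero_le)
        rw [hA, Set.indicator_of_mem (Set.mem_Icc.2 ⟨h, h2⟩)]
        exact ENNReal.ofReal_le_one.2
          (Real.rpow_le_one (psi_nonneg x) (psi_le_one x) (by norm_num))
      · refine le_trans ?_ (le_add_of_nonneg_right zero_le)
        refine le_trans ?_ (le_add_of_nonneg_left zero_le)
        rw [hB, Set.indicator_of_mem (by exact h2), tailFn]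
        apply ENNReal.ofReal_le_ofReal
        refine Real.rpow_le_rpow (psi_nonneg x) ?_ (by norm_num)
        have hax : |x| = x := abs_of_pos (by linarith)
        simp only [psi, hax]
        exact min_le_right _ _
  have hmA : Measurable A := measurable_const.indicator measurableSet_Icc
  have hmB : Measurable B := measurable_tailFn.indicator measurableSet_Ioi
  calc ∫⁻ x : ℝ, ENNReal.ofReal (rho x) ≤ ∫⁻ x : ℝ, (A x + B x + C x) :=
        lintegral_mono hbound
    _ = (∫⁻ x, A x) + (∫⁻ x, B x) + (∫⁻ x, C x) := by
        have hmAB : Measurable fun x => A x + B x := hmA.add hmB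
        rw [lintegral_add_left hmAB, lintegral_add_left hmA]
    _ = 2 + 4 + 4 := by
        congr 1
        · congr 1
          · rw [hA, lintegral_indicator measurableSet_Icc, setLIntegral_one, Real.volume_Icc]
            norm_num
          · rw [hB, lintegral_indicator measurableSet_Ioi]
            exact tail_lintegral
        · have hneg := (Measure.measurePreserving_neg (volume : Measure ℝ)).lintegral_comp
            (f := (Set.Ioi (1:ℝ)).indicator tailFn)
            (measurable_tailFn.indicator measurableSet_Ioi)
          rw [hC]
          rw [show (∫⁻ x : ℝ, (Set.Ioi (1:ℝ)).indicator tailFn (-x))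
              = ∫⁻ x : ℝ, (Set.Ioi (1:ℝ)).indicator tailFn x from hneg]
          rw [lintegral_indicator measurableSet_Ioi]
          exact tail_lintegral
    _ ≤ 10 := by norm_num

lemma ae_ne (a : ℝ) : ∀ᵐ x : ℝ, x ≠ a := by
  rw [ae_iff]
  simp only [ne_eq, not_not, Set.setOf_eq_eq_singleton]
  exact measure_singleton a

/-- The main bound on a single shifted integral. -/
lemma F_le {c : ℝ} (hc : 2 ≤ |c|) :
    ∫⁻ x : ℝ, ENNReal.ofReal |_root_.sinc x * _root_.sinc (x + c)| ≤
      ENNReal.ofReal ((2/|c|) ^ ((3:ℝ)/4)) * 20 := by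
  have hae : ∀ᵐ x : ℝ, ENNReal.ofReal |_root_.sinc x * _root_.sinc (x + c)| ≤
      ENNReal.ofReal ((2/|c|) ^ ((3:ℝ)/4)) *
        (ENNReal.ofReal (rho x) + ENNReal.ofReal (rho (x + c))) := by
    filter_upwards [ae_ne 0, ae_ne (-c)] with x hx0 hx1
    have hxc : x + c ≠ 0 := fun h => hx1 (by linarith)
    have hkey := key_pointwise hc hx0 hxc
    calc ENNReal.ofReal |_root_.sinc x * _root_.sinc (x + c)|
        ≤ ENNReal.ofReal ((2/|c|) ^ ((3:ℝ)/4) * (rho x + rho (x + c))) :=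
          ENNReal.ofReal_le_ofReal hkey
      _ = _ := by
          rw [ENNReal.ofReal_mul (by positivity),
            ENNReal.ofReal_add (rho_nonneg _) (rho_nonneg _)]
  have hmrho : Measurable fun x : ℝ => ENNReal.ofReal (rho x) :=
    ENNReal.measurable_ofReal.comp measurable_rho
  calc ∫⁻ x : ℝ, ENNReal.ofReal |_root_.sinc x * _root_.sinc (x + c)|
      ≤ ∫⁻ x : ℝ, ENNReal.ofReal ((2/|c|) ^ ((3:ℝ)/4)) *
        (ENNReal.ofReal (rho x) + ENNReal.ofReal (rho (x + c))) := lintegral_mono_ae hae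
    _ = ENNReal.ofReal ((2/|c|) ^ ((3:ℝ)/4)) *
        ((∫⁻ x : ℝ, ENNReal.ofReal (rho x)) + ∫⁻ x : ℝ, ENNReal.ofReal (rho (x + c))) := by
        rw [lintegral_const_mul' _ _ ENNReal.ofReal_ne_top, lintegral_add_left hmrho]
    _ = ENNReal.ofReal ((2/|c|) ^ ((3:ℝ)/4)) *
        ((∫⁻ x : ℝ, ENNReal.ofReal (rho x)) + ∫⁻ x : ℝ, ENNReal.ofReal (rho x)) := by
        rw [(measurePreserving_add_right (volume : Measure ℝ) c).lintegral_comp hmrho]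
    _ ≤ ENNReal.ofReal ((2/|c|) ^ ((3:ℝ)/4)) * (10 + 10) := by
        gcongr <;> exact rho_lintegral_le
    _ = ENNReal.ofReal ((2/|c|) ^ ((3:ℝ)/4)) * 20 := by norm_num

/-- The `m = 0` bound. -/
lemma F0_le : ∫⁻ x : ℝ, ENNReal.ofReal |_root_.sinc x * _root_.sinc x| ≤ 10 := by
  have hae : ∀ᵐ x : ℝ, ENNReal.ofReal |_root_.sinc x * _root_.sinc x| ≤ ENNReal.ofReal (rho x) := by
    filter_upwards [ae_ne 0] with x hx0
    apply ENNReal.ofReal_le_ofReal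
    have h1 : |_root_.sinc x * _root_.sinc x| ≤ psi x * psi x := by
      rw [abs_mul]
      exact mul_le_mul (abs_sinc_le hx0) (abs_sinc_le hx0) (abs_nonneg _) (psi_nonneg x)
    refine h1.trans ?_
    have h2 : psi x * psi x = psi x ^ (2:ℝ) := by
      rw [show (2:ℝ) = 1 + 1 by norm_num, Real.rpow_add (psi_pos hx0), Real.rpow_one]
    rw [h2, rho]
    exact Real.rpow_le_rpow_of_exponent_ge (psi_pos hx0) (psi_le_one x) (by norm_num)
  exact le_trans (lintegral_mono_ae hae) rho_lintegral_le

lemma sqrt_step {x : ℝ} (hx : 1 ≤ x) :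
    (x + 1) ^ (-(3:ℝ)/2) ≤ 2 / Real.sqrt x - 2 / Real.sqrt (x + 1) := by
  have hx0 : (0:ℝ) < x := by linarith
  have hx10 : (0:ℝ) < x + 1 := by linarith
  set s := Real.sqrt x with hs
  set t := Real.sqrt (x + 1) with ht
  have hs0 : 0 < s := Real.sqrt_pos.2 hx0
  have ht0 : 0 < t := Real.sqrt_pos.2 hx10
  have hs2 : s ^ 2 = x := Real.sq_sqrt hx0.le
  have ht2 : t ^ 2 = x + 1 := Real.sq_sqrt hx10.le
  have hst : s ≤ t := Real.sqrt_le_sqrt (by linarith)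
  have hmain : (x + 1) ^ (-(3:ℝ)/2) = (t ^ 3)⁻¹ := by
    rw [show (-(3:ℝ)/2) = -(3/2) by norm_num, Real.rpow_neg hx10.le]
    congr 1
    rw [ht, Real.sqrt_eq_rpow, ← Real.rpow_natCast ((x+1) ^ ((1:ℝ)/2)) 3,
      ← Real.rpow_mul hx10.le]
    norm_num
  rw [hmain, div_sub_div _ _ hs0.ne' ht0.ne', inv_eq_one_div,
    div_le_div_iff₀ (by positivity) (by positivity)]
  have h2 : (t - s) * (t + s) = 1 := by nlinarith
  nlinarith [mul_le_mul_of_nonneg_left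
    (mul_le_mul_of_nonneg_left hst ht0.le) ht0.le, sub_nonneg.2 hst,
    mul_pos hs0 ht0, mul_pos (mul_pos hs0 ht0) (by linarith : (0:ℝ) < t + s)]

lemma sum_rpow_le {a : ℤ} (ha : 1 ≤ a) :
    ∑ m ∈ Finset.Icc (1:ℤ) a, ((m:ℝ)) ^ (-(3:ℝ)/2) ≤ 3 - 2 / Real.sqrt (a:ℝ) := by
  refine Int.le_induction (motive := fun b _ => ∑ m ∈ Finset.Icc (1:ℤ) b,
    ((m:ℝ)) ^ (-(3:ℝ)/2) ≤ 3 - 2 / Real.sqrt (b:ℝ)) ?_ ?_ a ha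
  · show _ ≤ _
    rw [Finset.Icc_self, Finset.sum_singleton]
    norm_num [Real.one_rpow, Real.sqrt_one]
  · intro a ha IH
    show _ ≤ _
    have hins : Finset.Icc (1:ℤ) (a + 1) = insert (a + 1) (Finset.Icc 1 a) := by
      ext m; simp only [Finset.mem_Icc, Finset.mem_insert]; omega
    rw [hins, Finset.sum_insert (by simp only [Finset.mem_Icc]; omega)]
    have hx : (1:ℝ) ≤ (a:ℝ) := by exact_mod_cast ha
    have hstep := sqrt_step hx
    push_cast
    push_cast at IH
    linarith

lemma sum_rpow_le' {a : ℤ} (ha : 1 ≤ a) :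
    ∑ m ∈ Finset.Icc (1:ℤ) a, ((m:ℝ)) ^ (-(3:ℝ)/2) ≤ 3 := by
  have h1 := sum_rpow_le ha
  have h2 : 0 ≤ 2 / Real.sqrt (a:ℝ) := by positivity
  linarith

/-- The dominating sequence for the terms of the sum. -/
def g (m : ℤ) : ℝ≥0∞ :=
  if m = 0 then 100 else ENNReal.ofReal (400 * |(m:ℝ)| ^ (-(3:ℝ)/2))

lemma g_neg (m : ℤ) : g (-m) = g m := by
  simp only [g, neg_eq_zero, Int.cast_neg, abs_neg]

/-- The per-term bound. -/
lemma term_le_g (m : ℤ) :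
    (∫⁻ x : ℝ, ENNReal.ofReal |_root_.sinc x * _root_.sinc (x + (m : ℝ) * π)|) *
      (∫⁻ y : ℝ, ENNReal.ofReal |_root_.sinc y * _root_.sinc (y + (m : ℝ) * π)|) ≤ g m := by
  rcases eq_or_ne m 0 with rfl | hm
  · have h0 : (∫⁻ x : ℝ, ENNReal.ofReal |_root_.sinc x * _root_.sinc (x + ((0:ℤ) : ℝ) * π)|) =
        ∫⁻ x : ℝ, ENNReal.ofReal |_root_.sinc x * _root_.sinc x| := by
      congr 1; funext x; norm_num
    rw [g, if_pos rfl, h0]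
    calc (∫⁻ x : ℝ, ENNReal.ofReal |_root_.sinc x * _root_.sinc x|) *
          (∫⁻ x : ℝ, ENNReal.ofReal |_root_.sinc x * _root_.sinc x|) ≤ 10 * 10 :=
          mul_le_mul' F0_le F0_le
      _ = 100 := by norm_num
  · -- m ≠ 0
    have hm1 : (1:ℝ) ≤ |(m:ℝ)| := by
      rw [← Int.cast_abs]
      exact_mod_cast Int.one_le_abs (by exact_mod_cast hm)
    have hpi : (2:ℝ) ≤ π := by
      have := Real.pi_gt_three
      linarith
    have habs : |(m:ℝ) * π| = |(m:ℝ)| * π := by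
      rw [abs_mul, abs_of_pos Real.pi_pos]
    have hc : 2 ≤ |(m:ℝ) * π| := by
      rw [habs]
      nlinarith
    have hF := F_le hc
    have hle : ENNReal.ofReal ((2/|(m:ℝ) * π|) ^ ((3:ℝ)/4)) ≤
        ENNReal.ofReal (|(m:ℝ)| ^ (-(3:ℝ)/4)) := by
      apply ENNReal.ofReal_le_ofReal
      have h1 : 2/|(m:ℝ) * π| ≤ |(m:ℝ)|⁻¹ := by
        rw [habs, inv_eq_one_div, div_le_div_iff₀ (by positivity) (by positivity)]
        nlinarith
      calc (2/|(m:ℝ) * π|) ^ ((3:ℝ)/4) ≤ (|(m:ℝ)|⁻¹) ^ ((3:ℝ)/4) :=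
            Real.rpow_le_rpow (by positivity) h1 (by norm_num)
        _ = |(m:ℝ)| ^ (-(3:ℝ)/4) := by
            rw [Real.inv_rpow (abs_nonneg _), ← Real.rpow_neg (abs_nonneg _)]
            norm_num
    have hF2 : (∫⁻ x : ℝ, ENNReal.ofReal |_root_.sinc x * _root_.sinc (x + (m : ℝ) * π)|) ≤
        ENNReal.ofReal (|(m:ℝ)| ^ (-(3:ℝ)/4)) * 20 := le_trans hF (by gcongr)
    rw [g, if_neg hm]
    calc (∫⁻ x : ℝ, ENNReal.ofReal |_root_.sinc x * _root_.sinc (x + (m : ℝ) * π)|) *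
          (∫⁻ y : ℝ, ENNReal.ofReal |_root_.sinc y * _root_.sinc (y + (m : ℝ) * π)|)
        ≤ (ENNReal.ofReal (|(m:ℝ)| ^ (-(3:ℝ)/4)) * 20) *
          (ENNReal.ofReal (|(m:ℝ)| ^ (-(3:ℝ)/4)) * 20) := mul_le_mul' hF2 hF2
      _ = ENNReal.ofReal (|(m:ℝ)| ^ (-(3:ℝ)/4)) * ENNReal.ofReal (|(m:ℝ)| ^ (-(3:ℝ)/4))
          * 400 := by ring
      _ = ENNReal.ofReal (400 * |(m:ℝ)| ^ (-(3:ℝ)/2)) := by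
          rw [← ENNReal.ofReal_mul (by positivity), ← Real.rpow_add (by positivity),
            show (-(3:ℝ)/4 + -(3:ℝ)/4) = -(3:ℝ)/2 by norm_num,
            show (400:ℝ≥0∞) = ENNReal.ofReal 400 by norm_num,
            ← ENNReal.ofReal_mul (by positivity)]
          congr 1
          ring

lemma sum_g_le {a : ℤ} (ha : 1 ≤ a) :
    ∑ m ∈ Finset.Icc (-a) a, g m ≤ ENNReal.ofReal 2500 := by
  have hsplit : Finset.Icc (-a) a = Finset.Icc (-a) (-1) ∪ Finset.Icc 0 a := by
    ext m; simp only [Finset.mem_Icc, Finset.mem_union]; omega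
  have hdisj : Disjoint (Finset.Icc (-a) (-1)) (Finset.Icc (0:ℤ) a) := by
    rw [Finset.disjoint_left]
    intro m hm hm'
    simp only [Finset.mem_Icc] at hm hm'
    omega
  have h0a : Finset.Icc (0:ℤ) a = insert 0 (Finset.Icc 1 a) := by
    ext m; simp only [Finset.mem_Icc, Finset.mem_insert]; omega
  have hnegsum : ∑ m ∈ Finset.Icc (-a) (-1), g m = ∑ m ∈ Finset.Icc (1:ℤ) a, g m := by
    refine Finset.sum_nbij' (i := fun m => -m) (j := fun m => -m) ?_ ?_ ?_ ?_ ?_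
    · intro m hm; simp only [Finset.mem_Icc] at *; omega
    · intro m hm; simp only [Finset.mem_Icc] at *; omega
    · intro m _; ring
    · intro m _; ring
    · intro m _
      exact (g_neg m).symm
  have hpos : ∑ m ∈ Finset.Icc (1:ℤ) a, g m ≤ ENNReal.ofReal 1200 := by
    have hcongr : ∑ m ∈ Finset.Icc (1:ℤ) a, g m =
        ∑ m ∈ Finset.Icc (1:ℤ) a, ENNReal.ofReal (400 * ((m:ℝ)) ^ (-(3:ℝ)/2)) := by
      refine Finset.sum_congr rfl (fun m hm => ?_)
      simp only [Finset.mem_Icc] at hm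
      rw [g, if_neg (by omega),
        abs_of_pos (show (0:ℝ) < (m:ℝ) by exact_mod_cast (by omega : (0:ℤ) < m))]
    rw [hcongr, ← ENNReal.ofReal_sum_of_nonneg (fun m hm => ?_)]
    swap
    · simp only [Finset.mem_Icc] at hm
      have hm0 : (0:ℝ) < (m:ℝ) := by exact_mod_cast (by omega : (0:ℤ) < m)
      positivity
    apply ENNReal.ofReal_le_ofReal
    rw [← Finset.mul_sum]
    calc 400 * ∑ m ∈ Finset.Icc (1:ℤ) a, ((m:ℝ)) ^ (-(3:ℝ)/2) ≤ 400 * 3 := by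
          have := sum_rpow_le' ha
          nlinarith [this]
      _ = 1200 := by norm_num
  calc ∑ m ∈ Finset.Icc (-a) a, g m
      = (∑ m ∈ Finset.Icc (-a) (-1), g m) + ∑ m ∈ Finset.Icc (0:ℤ) a, g m := by
        rw [hsplit, Finset.sum_union hdisj]
    _ = (∑ m ∈ Finset.Icc (1:ℤ) a, g m) + (g 0 + ∑ m ∈ Finset.Icc (1:ℤ) a, g m) := by
        rw [hnegsum, h0a, Finset.sum_insert (by simp [Finset.mem_Icc])]
    _ ≤ ENNReal.ofReal 1200 + (100 + ENNReal.ofReal 1200) := by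
        have hg0 : g 0 = 100 := by rw [g, if_pos rfl]
        rw [hg0]
        exact add_le_add hpos (add_le_add le_rfl hpos)
    _ = ENNReal.ofReal 2500 := by
        rw [show (100:ℝ≥0∞) = ENNReal.ofReal 100 by norm_num,
          ← ENNReal.ofReal_add (by norm_num) (by norm_num),
          ← ENNReal.ofReal_add (by norm_num) (by norm_num)]
        norm_num

end SincShiftAux

/-- There is a finite constant `C` such that for every integer `a ≥ 1`,
`Σ_{m=-a}^{a} (∫ sin²(x)/|x(x+mπ)| dx) (∫ sin²(y)/|y(y+mπ)| dy) ≤ C`;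
in particular the bound is uniform in `a`. -/
theorem sum_prod_integral_sinc_shift_le :
    ∃ C : ℝ,
      ∀ a : ℤ, 1 ≤ a →
        ∑ m ∈ Finset.Icc (-a) a,
            (∫⁻ x : ℝ, ENNReal.ofReal |_root_.sinc x * _root_.sinc (x + (m : ℝ) * π)|) *
              (∫⁻ y : ℝ, ENNReal.ofReal |_root_.sinc y * _root_.sinc (y + (m : ℝ) * π)|) ≤
          ENNReal.ofReal C := by
  refine ⟨2500, fun a ha => ?_⟩
  calc ∑ m ∈ Finset.Icc (-a) a,
        (∫⁻ x : ℝ, ENNReal.ofReal |_root_.sinc x * _root_.sinc (x + (m : ℝ) * π)|) *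
          (∫⁻ y : ℝ, ENNReal.ofReal |_root_.sinc y * _root_.sinc (y + (m : ℝ) * π)|)
      ≤ ∑ m ∈ Finset.Icc (-a) a, SincShiftAux.g m :=
        Finset.sum_le_sum (fun m _ => SincShiftAux.term_le_g m)
    _ ≤ ENNReal.ofReal 2500 := SincShiftAux.sum_g_le ha

end
end
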